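/- arXiv:1202.4350 — 6 statements merged into one kernel-verified Lean document; each statement's English description precedes it below -/
import Mathlib

section
/- Let G be a topological group, let m be a finite Radon measure on G, and let F be an equi-LUC subset of LUC(G). Then the restriction to F of the functional f ↦ ∫ f dm is continuous in the topology of pointwise convergence on G. -/
noncomputable section
set_option linter.unusedSectionVars false

open Filter Topology MeasureTheory BoundedContinuousFunction

section Defs

variable (G : Type*) [Group G] [TopologicalSpace G] [IsTopologicalGroup G]

/-- A bounded left uniformly continuous function on a topological group. -/
def IsLUCFun (f : G → ℂ) : Prop :=
  (∃ C, ∀ s, ‖f s‖ ≤ C) ∧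
    ∀ ε > 0, ∃ U ∈ 𝓝 (1 : G), ∀ s t : G, s * t⁻¹ ∈ U → ‖f s - f t‖ < ε

/-- A set of functions is equi-LUC if it is uniformly bounded in the sup norm and
equi-uniformly continuous for the right uniformity. -/
def EquiLUCFun (F : Set (G → ℂ)) : Prop :=
  (∃ C, ∀ f ∈ F, ∀ s, ‖f s‖ ≤ C) ∧
    ∀ ε > 0, ∃ U ∈ 𝓝 (1 : G), ∀ f ∈ F, ∀ s t : G, s * t⁻¹ ∈ U → ‖f s - f t‖ < ε

/-- A SIN group: there is a base of neighbourhoods of the identity that are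
invariant under all inner automorphisms. -/
def IsSIN : Prop :=
  ∀ U ∈ 𝓝 (1 : G), ∃ V ∈ 𝓝 (1 : G), V ⊆ U ∧ ∀ x : G, ∀ v ∈ V, x * v * x⁻¹ ∈ V

end Defs

/-- Each member of an equi-LUC family is continuous. -/
lemma continuous_of_equiLUC {G : Type*} [Group G] [TopologicalSpace G] [IsTopologicalGroup G]
    {F : Set (G → ℂ)} (hF : EquiLUCFun G F) {f : G → ℂ} (hf : f ∈ F) : Continuous f := by
  rw [continuous_iff_continuousAt]
  intro t
  rw [ContinuousAt, Metric.tendsto_nhds]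
  intro ε hε
  obtain ⟨U, hU, hUF⟩ := hF.2 ε hε
  have hmem : (fun s => s * t⁻¹) ⁻¹' U ∈ 𝓝 t := by
    have hc : Continuous fun s : G => s * t⁻¹ := continuous_id.mul continuous_const
    exact hc.continuousAt.preimage_mem_nhds (by simpa using hU)
  filter_upwards [hmem] with s hs
  rw [Complex.dist_eq]
  exact hUF f hf s t hs

/-- Each member of an equi-LUC family is integrable with respect to a finite measure. -/
lemma integrable_of_equiLUC {G : Type*} [Group G] [TopologicalSpace G] [IsTopologicalGroup G]
    [MeasurableSpace G] [BorelSpace G] (μ : Measure G) [IsFiniteMeasure μ]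
    {F : Set (G → ℂ)} (hF : EquiLUCFun G F) {f : G → ℂ} (hf : f ∈ F) : Integrable f μ := by
  obtain ⟨C, hC⟩ := hF.1
  exact ⟨(continuous_of_equiLUC hF hf).aestronglyMeasurable,
    HasFiniteIntegral.of_bounded (C := C) (ae_of_all _ (hC f hf))⟩

/-- **Lemma (paper Lemma 5.1).** For a finite Radon measure `μ` on a topological
group `G` and an equi-LUC set `F`, the functional `f ↦ ∫ f dμ` restricted to `F` is
continuous in the topology of pointwise convergence on `G`. -/
theorem integral_continuous_on_equiLUC_pointwise
    (G : Type*) [Group G] [TopologicalSpace G] [IsTopologicalGroup G]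
    [MeasurableSpace G] [BorelSpace G]
    (μ : Measure G) [IsFiniteMeasure μ] [μ.InnerRegular]
    (F : Set (G → ℂ)) (hF : EquiLUCFun G F) :
    Continuous (fun f : F => ∫ x, (f : G → ℂ) x ∂μ) := by
  rw [continuous_iff_continuousAt]
  intro f₀
  rw [ContinuousAt, Metric.tendsto_nhds]
  intro ε hε
  obtain ⟨C₀, hC₀⟩ := hF.1
  set C : ℝ := max C₀ 0 with hCdef
  have hC : ∀ f ∈ F, ∀ s, ‖f s‖ ≤ C := fun f hf s => (hC₀ f hf s).trans (le_max_left _ _)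
  have hC0 : 0 ≤ C := le_max_right _ _
  set M : ℝ := (μ Set.univ).toReal with hMdef
  have hM0 : 0 ≤ M := ENNReal.toReal_nonneg
  set δ : ℝ := ε / (6 * M + 6) with hδdef
  have hδ : 0 < δ := div_pos hε (by linarith)
  -- equicontinuity neighbourhood
  obtain ⟨U, hU, hUF⟩ := hF.2 δ hδ
  obtain ⟨V, hVU, hVopen, hV1⟩ := mem_nhds_iff.1 hU
  -- compact approximation of the whole space
  have hεK : (ENNReal.ofReal (ε / (8 * C + 8))) ≠ 0 := by
    simp only [ne_eq, ENNReal.ofReal_eq_zero, not_le]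
    positivity
  obtain ⟨K, -, hKcomp, hKμ⟩ :=
    MeasurableSet.univ.exists_isCompact_lt_add (μ := μ) (measure_ne_top μ _) hεK
  -- finite subcover of K by right translates of V
  set cSet : G → Set G := fun x => (fun y => y * x⁻¹) ⁻¹' V with hcdef
  have hcopen : ∀ x : G, IsOpen (cSet x) :=
    fun x => hVopen.preimage (continuous_id.mul continuous_const)
  have hcmem : ∀ x : G, x ∈ cSet x := by
    intro x; simp only [hcdef, Set.mem_preimage, mul_inv_cancel]; exact hV1
  obtain ⟨t, ht⟩ := hKcomp.elim_finite_subcover (fun x : K => cSet ↑x)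
    (fun x => hcopen _) (fun x hx => Set.mem_iUnion.2 ⟨⟨x, hx⟩, hcmem x⟩)
  set W : Set G := ⋃ i ∈ t, cSet ↑i with hWdef
  have hWopen : IsOpen W := isOpen_biUnion fun i _ => hcopen _
  have hKW : K ⊆ W := by
    intro x hx
    obtain ⟨i, hi⟩ := Set.mem_iUnion.1 (ht hx)
    simp only [Set.mem_iUnion] at hi
    exact Set.mem_biUnion hi.1 hi.2
  -- the complement of W has small measure
  have hWc : (μ Wᶜ).toReal ≤ ε / (8 * C + 8) := by
    have h1 : μ Wᶜ = μ Set.univ - μ W := measure_compl hWopen.measurableSet (measure_ne_top μ _)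
    have h2 : μ Set.univ - μ W < ENNReal.ofReal (ε / (8 * C + 8)) := by
      rw [ENNReal.sub_lt_iff_lt_right (measure_ne_top μ _) (measure_mono (Set.subset_univ _))]
      calc μ Set.univ < μ K + ENNReal.ofReal (ε / (8 * C + 8)) := hKμ
        _ ≤ μ W + ENNReal.ofReal (ε / (8 * C + 8)) :=
            add_le_add_left (measure_mono hKW) _
        _ = ENNReal.ofReal (ε / (8 * C + 8)) + μ W := add_comm _ _
    rw [h1]
    calc (μ Set.univ - μ W).toReal
        ≤ (ENNReal.ofReal (ε / (8 * C + 8))).toReal :=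
          ENNReal.toReal_mono ENNReal.ofReal_ne_top h2.le
      _ = ε / (8 * C + 8) := ENNReal.toReal_ofReal (by positivity)
  have hWc0 : 0 ≤ (μ Wᶜ).toReal := ENNReal.toReal_nonneg
  -- the eventual neighbourhood in the pointwise topology
  have hev : ∀ᶠ f : F in 𝓝 f₀, ∀ i ∈ t, ‖(f : G → ℂ) ↑i - (f₀ : G → ℂ) ↑i‖ < δ := by
    rw [Finset.eventually_all]
    intro i _
    have hconteval : Continuous fun f : F => (f : G → ℂ) (↑i : G) :=
      (continuous_apply (↑i : G)).comp continuous_subtype_val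
    have : {z : ℂ | ‖z - (f₀ : G → ℂ) ↑i‖ < δ} ∈ 𝓝 ((f₀ : G → ℂ) ↑i) := by
      have := Metric.ball_mem_nhds ((f₀ : G → ℂ) ↑i) hδ
      simpa [Metric.ball, Complex.dist_eq] using this
    exact hconteval.continuousAt.preimage_mem_nhds this
  filter_upwards [hev] with f hf
  -- pointwise estimate
  set g : G → ℝ := fun x => 3 * δ + Set.indicator Wᶜ (fun _ => 2 * C) x with hgdef
  have hptwise : ∀ x, ‖(f : G → ℂ) x - (f₀ : G → ℂ) x‖ ≤ g x := by
    intro x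
    by_cases hx : x ∈ W
    · obtain ⟨i, hit, hxi⟩ := by
        simpa only [hWdef, Set.mem_iUnion, exists_prop] using hx
      have hxU : x * (↑i : G)⁻¹ ∈ U := hVU hxi
      have h1 : ‖(f : G → ℂ) x - (f : G → ℂ) ↑i‖ < δ := hUF _ f.2 x ↑i hxU
      have h2 : ‖(f : G → ℂ) ↑i - (f₀ : G → ℂ) ↑i‖ < δ := hf i hit
      have h3 : ‖(f₀ : G → ℂ) ↑i - (f₀ : G → ℂ) x‖ < δ := by
        rw [norm_sub_rev]; exact hUF _ f₀.2 x ↑i hxU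
      have hind : Set.indicator Wᶜ (fun _ => 2 * C) x = 0 :=
        Set.indicator_of_notMem (by simpa using hx) _
      have : ‖(f : G → ℂ) x - (f₀ : G → ℂ) x‖ ≤
          ‖(f : G → ℂ) x - (f : G → ℂ) ↑i‖ + ‖(f : G → ℂ) ↑i - (f₀ : G → ℂ) ↑i‖ +
            ‖(f₀ : G → ℂ) ↑i - (f₀ : G → ℂ) x‖ := by
        have := norm_sub_le_norm_sub_add_norm_sub ((f : G → ℂ) x) ((f₀ : G → ℂ) ↑i)
          ((f₀ : G → ℂ) x)
        have h4 := norm_sub_le_norm_sub_add_norm_sub ((f : G → ℂ) x) ((f : G → ℂ) ↑i)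
          ((f₀ : G → ℂ) ↑i)
        linarith
      simp only [hgdef, hind, add_zero]
      linarith
    · have hind : Set.indicator Wᶜ (fun _ => 2 * C) x = 2 * C :=
        Set.indicator_of_mem (by simpa using hx) _
      have h1 : ‖(f : G → ℂ) x‖ ≤ C := hC _ f.2 x
      have h2 : ‖(f₀ : G → ℂ) x‖ ≤ C := hC _ f₀.2 x
      have := norm_sub_le ((f : G → ℂ) x) ((f₀ : G → ℂ) x)
      simp only [hgdef, hind]
      linarith
  -- integrability
  have hintf : Integrable (fun x => (f : G → ℂ) x) μ := integrable_of_equiLUC μ hF f.2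
  have hintf₀ : Integrable (fun x => (f₀ : G → ℂ) x) μ := integrable_of_equiLUC μ hF f₀.2
  have hintg : Integrable g μ := by
    apply (integrable_const (3 * δ)).add
    rw [integrable_indicator_iff hWopen.measurableSet.compl]
    exact (integrable_const _).integrableOn
  -- integral estimate
  have hgint : ∫ x, g x ∂μ = 3 * δ * M + (μ Wᶜ).toReal * (2 * C) := by
    rw [hgdef]
    rw [integral_add (integrable_const _) (by
      rw [integrable_indicator_iff hWopen.measurableSet.compl]
      exact (integrable_const _).integrableOn)]
    rw [integral_const, integral_indicator_const _ hWopen.measurableSet.compl]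
    simp [hMdef, mul_comm, smul_eq_mul, Measure.real]
  calc dist (∫ x, (f : G → ℂ) x ∂μ) (∫ x, (f₀ : G → ℂ) x ∂μ)
      = ‖∫ x, ((f : G → ℂ) x - (f₀ : G → ℂ) x) ∂μ‖ := by
        rw [dist_eq_norm, ← integral_sub hintf hintf₀]
    _ ≤ ∫ x, ‖(f : G → ℂ) x - (f₀ : G → ℂ) x‖ ∂μ := norm_integral_le_integral_norm _
    _ ≤ ∫ x, g x ∂μ := integral_mono (hintf.sub hintf₀).norm hintg hptwise
    _ = 3 * δ * M + (μ Wᶜ).toReal * (2 * C) := hgint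
    _ < ε := by
        have h1 : 3 * δ * M ≤ ε / 2 := by
          have h6 : (0:ℝ) < 6 * M + 6 := by linarith
          have hδε : δ * (6 * M + 6) = ε := div_mul_cancel₀ ε h6.ne'
          nlinarith [hδ.le, hM0]
        have h2 : (μ Wᶜ).toReal * (2 * C) ≤ ε / 4 := by
          calc (μ Wᶜ).toReal * (2 * C) ≤ ε / (8 * C + 8) * (2 * C) := by
                apply mul_le_mul_of_nonneg_right hWc (by positivity)
            _ ≤ ε / 4 := by
                have h8 : (0:ℝ) < 8 * C + 8 := by linarith
                rw [div_mul_eq_mul_div, div_le_div_iff₀ h8 (by norm_num)]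
                nlinarith
        linarith
end
end

section
/- Let G be a topological group, F ⊆ LUC(G) an equi-LUC set, and B ⊆ LUC(G)* a norm-bounded set. Then the set { r_n f : f ∈ F, n ∈ B }, where r_n f(s) = n(ℓ_s f), is an equi-LUC subset of LUC(G). -/
noncomputable section
set_option linter.unusedSectionVars false

open Filter Topology MeasureTheory BoundedContinuousFunction

section LUCSpace

variable (G : Type*) [Group G] [TopologicalSpace G] [IsTopologicalGroup G]

/-- The space `LUC(G)` of bounded left uniformly continuous complex functions on `G`,
as a subspace of the bounded continuous functions with the sup norm. -/
def LUC : Submodule ℂ (G →ᵇ ℂ) where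
  carrier := {f | ∀ ε > 0, ∃ U ∈ 𝓝 (1 : G), ∀ s t : G, s * t⁻¹ ∈ U → ‖f s - f t‖ < ε}
  zero_mem' := fun ε hε => ⟨Set.univ, Filter.univ_mem, fun s t _ => by simpa using hε⟩
  add_mem' := by
    intro f g hf hg ε hε
    obtain ⟨U, hU, hUf⟩ := hf (ε / 2) (by linarith)
    obtain ⟨V, hV, hVg⟩ := hg (ε / 2) (by linarith)
    refine ⟨U ∩ V, Filter.inter_mem hU hV, fun s t hst => ?_⟩
    have h1 := hUf s t hst.1
    have h2 := hVg s t hst.2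
    have e : (f + g) s - (f + g) t = (f s - f t) + (g s - g t) := by
      simp only [BoundedContinuousFunction.coe_add, Pi.add_apply]; ring
    calc ‖(f + g) s - (f + g) t‖ ≤ ‖f s - f t‖ + ‖g s - g t‖ := by
          rw [e]; exact norm_add_le _ _
      _ < ε := by linarith
  smul_mem' := by
    intro c f hf ε hε
    obtain ⟨U, hU, hUf⟩ := hf (ε / (‖c‖ + 1)) (by positivity)
    refine ⟨U, hU, fun s t hst => ?_⟩
    have h := hUf s t hst
    have e : (c • f) s - (c • f) t = c * (f s - f t) := by
      simp only [BoundedContinuousFunction.coe_smul, Pi.smul_apply, smul_eq_mul]; ring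
    rw [e, norm_mul]
    calc ‖c‖ * ‖f s - f t‖ ≤ ‖c‖ * (ε / (‖c‖ + 1)) :=
          mul_le_mul_of_nonneg_left h.le (norm_nonneg c)
      _ < (‖c‖ + 1) * (ε / (‖c‖ + 1)) :=
          mul_lt_mul_of_pos_right (by linarith) (by positivity)
      _ = ε := by field_simp

/-- Equi-LUC subsets of the space `LUC(G)`. -/
def EquiLUC (F : Set ↥(LUC G)) : Prop :=
  (∃ C, ∀ f ∈ F, ‖f‖ ≤ C) ∧
    ∀ ε > 0, ∃ U ∈ 𝓝 (1 : G), ∀ f ∈ F, ∀ s t : G,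
      s * t⁻¹ ∈ U → ‖(f : G →ᵇ ℂ) s - (f : G →ᵇ ℂ) t‖ < ε

variable {G}

lemma lTrans_mem (s : G) {f : G →ᵇ ℂ} (hf : f ∈ LUC G) :
    f.compContinuous ⟨fun x => s * x, by continuity⟩ ∈ LUC G := by
  intro ε hε
  obtain ⟨U, hU, hUf⟩ := hf ε hε
  refine ⟨(fun u => s * u * s⁻¹) ⁻¹' U, ?_, ?_⟩
  · have hc : ContinuousAt (fun u : G => s * u * s⁻¹) 1 := by fun_prop
    exact hc.preimage_mem_nhds (by simpa using hU)
  · intro x y hxy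
    have h' : (s * x) * (s * y)⁻¹ ∈ U := by
      have h'' : s * (x * y⁻¹) * s⁻¹ ∈ U := hxy
      simpa [mul_inv_rev, mul_assoc] using h''
    exact hUf (s * x) (s * y) h'

/-- Left translation `ℓ_s f (x) = f (s x)` on `LUC(G)`. -/
def lTrans (s : G) (f : ↥(LUC G)) : ↥(LUC G) :=
  ⟨(f : G →ᵇ ℂ).compContinuous ⟨fun x => s * x, by continuity⟩, lTrans_mem s f.2⟩

@[simp] lemma lTrans_apply (s : G) (f : ↥(LUC G)) (x : G) :
    ((lTrans s f : ↥(LUC G)) : G →ᵇ ℂ) x = (f : G →ᵇ ℂ) (s * x) := rfl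

variable (G) in
/-- The dual Banach space `LUC(G)*`. -/
abbrev LUCDual := StrongDual ℂ ↥(LUC G)

lemma lTrans_norm_le (s : G) (f : ↥(LUC G)) : ‖lTrans s f‖ ≤ ‖f‖ :=
  BoundedContinuousFunction.norm_compContinuous_le _ _

lemma lTrans_add (s : G) (f g : ↥(LUC G)) :
    lTrans s (f + g) = lTrans s f + lTrans s g := by
  apply Subtype.ext; ext x; rfl

lemma lTrans_smul (s : G) (c : ℂ) (f : ↥(LUC G)) :
    lTrans s (c • f) = c • lTrans s f := by
  apply Subtype.ext; ext x; rfl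

lemma luccond_continuous {g : G → ℂ}
    (h : ∀ ε > 0, ∃ U ∈ 𝓝 (1 : G), ∀ s t : G, s * t⁻¹ ∈ U → ‖g s - g t‖ < ε) :
    Continuous g := by
  rw [continuous_iff_continuousAt]
  intro t
  rw [ContinuousAt, Metric.tendsto_nhds]
  intro ε hε
  obtain ⟨U, hU, hUf⟩ := h ε hε
  have hmem : {s : G | s * t⁻¹ ∈ U} ∈ 𝓝 t := by
    have hc : ContinuousAt (fun s : G => s * t⁻¹) t := by fun_prop
    exact hc.preimage_mem_nhds (by simpa using hU)
  filter_upwards [hmem] with s hs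
  rw [dist_eq_norm]
  exact hUf s t hs

lemma rAct_cond (n : LUCDual G) (f : ↥(LUC G)) :
    ∀ ε > 0, ∃ U ∈ 𝓝 (1 : G), ∀ s t : G, s * t⁻¹ ∈ U →
      ‖n (lTrans s f) - n (lTrans t f)‖ < ε := by
  intro ε hε
  set δ := ε / (2 * (‖n‖ + 1)) with hδdef
  have hδ : 0 < δ := by positivity
  obtain ⟨U, hU, hUf⟩ := f.2 δ hδ
  refine ⟨U, hU, fun s t hst => ?_⟩
  have hdiff : ‖lTrans s f - lTrans t f‖ ≤ δ := by
    have : ‖((lTrans s f : ↥(LUC G)) : G →ᵇ ℂ) - ((lTrans t f : ↥(LUC G)) : G →ᵇ ℂ)‖ ≤ δ := by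
      apply BoundedContinuousFunction.norm_le hδ.le |>.2
      intro x
      have hx : (s * x) * (t * x)⁻¹ ∈ U := by
        simpa [mul_inv_rev, mul_assoc] using hst
      simpa using (hUf (s * x) (t * x) hx).le
    exact this
  calc ‖n (lTrans s f) - n (lTrans t f)‖ = ‖n (lTrans s f - lTrans t f)‖ := by
        rw [map_sub]
    _ ≤ ‖n‖ * ‖lTrans s f - lTrans t f‖ := n.le_opNorm _
    _ ≤ ‖n‖ * δ := mul_le_mul_of_nonneg_left hdiff (norm_nonneg n)
    _ < (‖n‖ + 1) * δ := mul_lt_mul_of_pos_right (by linarith) hδ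
    _ = ε / 2 := by rw [hδdef]; field_simp
    _ < ε := by linarith

/-- The function `r_n f : s ↦ n (ℓ_s f)`, as an element of `LUC(G)`. -/
def rAct (n : LUCDual G) (f : ↥(LUC G)) : ↥(LUC G) :=
  ⟨BoundedContinuousFunction.ofNormedAddCommGroup (fun s => n (lTrans s f))
      (luccond_continuous (rAct_cond n f))
      (‖n‖ * ‖f‖)
      (fun s => by
        calc ‖n (lTrans s f)‖ ≤ ‖n‖ * ‖lTrans s f‖ := n.le_opNorm _
          _ ≤ ‖n‖ * ‖f‖ := mul_le_mul_of_nonneg_left (lTrans_norm_le s f) (norm_nonneg n)),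
   fun ε hε => by
      obtain ⟨U, hU, h⟩ := rAct_cond n f ε hε
      exact ⟨U, hU, fun s t hst => h s t hst⟩⟩

@[simp] lemma rAct_apply (n : LUCDual G) (f : ↥(LUC G)) (s : G) :
    ((rAct n f : ↥(LUC G)) : G →ᵇ ℂ) s = n (lTrans s f) := rfl

lemma rAct_norm_le (n : LUCDual G) (f : ↥(LUC G)) : ‖rAct n f‖ ≤ ‖n‖ * ‖f‖ := by
  have h0 : (0 : ℝ) ≤ ‖n‖ * ‖f‖ := by positivity
  show ‖((rAct n f : ↥(LUC G)) : G →ᵇ ℂ)‖ ≤ ‖n‖ * ‖f‖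
  refine (BoundedContinuousFunction.norm_le h0).2 fun s => ?_
  calc ‖n (lTrans s f)‖ ≤ ‖n‖ * ‖lTrans s f‖ := n.le_opNorm _
    _ ≤ ‖n‖ * ‖f‖ := mul_le_mul_of_nonneg_left (lTrans_norm_le s f) (norm_nonneg n)

lemma rAct_add (n : LUCDual G) (f g : ↥(LUC G)) :
    rAct n (f + g) = rAct n f + rAct n g := by
  apply Subtype.ext
  ext s
  simp [rAct_apply, lTrans_add, map_add]

lemma rAct_smul (n : LUCDual G) (c : ℂ) (f : ↥(LUC G)) :
    rAct n (c • f) = c • rAct n f := by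
  apply Subtype.ext
  ext s
  simp [rAct_apply, lTrans_smul, _root_.map_smul]

/-- Convolution on `LUC(G)*`: `(m ∗ n)(f) = m (r_n f)`. -/
def conv (m n : LUCDual G) : LUCDual G :=
  LinearMap.mkContinuous
    { toFun := fun f => m (rAct n f)
      map_add' := by
        intro f g
        show m (rAct n (f + g)) = m (rAct n f) + m (rAct n g)
        rw [rAct_add, map_add]
      map_smul' := by
        intro c f
        show m (rAct n (c • f)) = c • m (rAct n f)
        rw [rAct_smul, _root_.map_smul] }
    (‖m‖ * ‖n‖)
    (fun f => by
      calc ‖m (rAct n f)‖ ≤ ‖m‖ * ‖rAct n f‖ := m.le_opNorm _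
        _ ≤ ‖m‖ * (‖n‖ * ‖f‖) :=
            mul_le_mul_of_nonneg_left (rAct_norm_le n f) (norm_nonneg m)
        _ = ‖m‖ * ‖n‖ * ‖f‖ := by ring)

@[simp] lemma conv_apply (m n : LUCDual G) (f : ↥(LUC G)) :
    conv m n f = m (rAct n f) := rfl

variable (G) in
/-- Convergence of a net in the UEB topology on `LUC(G)*`:
uniform convergence on every equi-LUC set. -/
def UEBTendsto {ι : Type*} (l : Filter ι) (m : ι → LUCDual G) (m₀ : LUCDual G) : Prop :=
  ∀ F : Set ↥(LUC G), EquiLUC G F → ∀ ε > 0, ∀ᶠ i in l, ∀ f ∈ F, ‖m i f - m₀ f‖ < ε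

variable (G) in
/-- The UEB topology on `LUC(G)*`: the topology of uniform convergence
on the equi-LUC subsets of `LUC(G)`. -/
def UEBTop : TopologicalSpace (LUCDual G) :=
  ⨅ F : {F : Set ↥(LUC G) // EquiLUC G F},
    TopologicalSpace.induced
      (fun m => UniformFun.ofFun (fun f : F.1 => m f.1) : LUCDual G → UniformFun F.1 ℂ)
      inferInstance

end LUCSpace

/-- **Lemma (paper Lemma 5.3).** If `F ⊆ LUC(G)` is equi-LUC and `B ⊆ LUC(G)*` is
norm-bounded, then `{ r_n f : f ∈ F, n ∈ B }`, where `r_n f (s) = n (ℓ_s f)`, is an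
equi-LUC set of functions on `G`. -/
theorem equiLUC_rAct
    (G : Type*) [Group G] [TopologicalSpace G] [IsTopologicalGroup G]
    (F : Set ↥(LUC G)) (hF : EquiLUC G F)
    (B : Set (LUCDual G)) (hB : ∃ C, ∀ n ∈ B, ‖n‖ ≤ C) :
    EquiLUCFun G {g : G → ℂ | ∃ f ∈ F, ∃ n ∈ B, g = fun s => n (lTrans s f)} := by
  obtain ⟨CB, hCB⟩ := hB
  obtain ⟨⟨CF, hCF⟩, hEq⟩ := hF
  constructor
  · refine ⟨max CB 0 * max CF 0, ?_⟩
    rintro g ⟨f, hf, n, hn, rfl⟩ s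
    have h1 : ‖n (lTrans s f)‖ ≤ ‖n‖ * ‖f‖ :=
      le_trans (n.le_opNorm _) (mul_le_mul_of_nonneg_left (lTrans_norm_le s f) (norm_nonneg n))
    refine le_trans h1 (mul_le_mul ?_ ?_ (norm_nonneg _) (le_max_right _ _))
    · exact le_trans (hCB n hn) (le_max_left _ _)
    · exact le_trans (hCF f hf) (le_max_left _ _)
  · intro ε hε
    set δ := ε / (2 * (max CB 0 + 1)) with hδdef
    have hM0 : (0 : ℝ) ≤ max CB 0 := le_max_right _ _
    have hδ : 0 < δ := by positivity
    obtain ⟨U, hU, hUf⟩ := hEq δ hδ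
    refine ⟨U, hU, ?_⟩
    rintro g ⟨f, hf, n, hn, rfl⟩ s t hst
    have hdiff : ‖lTrans s f - lTrans t f‖ ≤ δ := by
      show ‖((lTrans s f : ↥(LUC G)) : G →ᵇ ℂ) - ((lTrans t f : ↥(LUC G)) : G →ᵇ ℂ)‖ ≤ δ
      refine (BoundedContinuousFunction.norm_le hδ.le).2 fun x => ?_
      have hx : (s * x) * (t * x)⁻¹ ∈ U := by
        simpa [mul_inv_rev, mul_assoc] using hst
      simpa using (hUf f hf (s * x) (t * x) hx).le
    have hnB : ‖n‖ ≤ max CB 0 := le_trans (hCB n hn) (le_max_left _ _)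
    calc ‖n (lTrans s f) - n (lTrans t f)‖ = ‖n (lTrans s f - lTrans t f)‖ := by
          rw [map_sub]
      _ ≤ ‖n‖ * ‖lTrans s f - lTrans t f‖ := n.le_opNorm _
      _ ≤ (max CB 0) * δ := by
          exact mul_le_mul hnB hdiff (norm_nonneg _) hM0
      _ < (max CB 0 + 1) * δ := mul_lt_mul_of_pos_right (by linarith) hδ
      _ = ε / 2 := by rw [hδdef]; field_simp
      _ < ε := by linarith
end
end

section
/- Let G be a topological group, B ⊆ LUC(G)* a norm-bounded set, m₀ ∈ M(G) (a finite Radon measure viewed as an element of LUC(G)*), and n₀ ∈ B. Then the convolution map (m, n) ↦ m ∗ n from LUC(G)* × B to LUC(G)* is jointly continuous at (m₀, n₀) when all spaces carry the UEB topology; that is, if m_α → m₀ and n_α → n₀ in the UEB topology with n_α ∈ B, then m_α ∗ n_α → m₀ ∗ n₀ in the UEB topology. -/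
noncomputable section
set_option linter.unusedSectionVars false

open Filter Topology MeasureTheory BoundedContinuousFunction

section MeasureStuff

variable {G : Type*} [Group G] [TopologicalSpace G] [IsTopologicalGroup G]
variable [MeasurableSpace G] [BorelSpace G]

lemma integrable_mul_luc (μ : Measure G) {f : G → ℂ} (hf : Integrable f μ)
    (h : ↥(LUC G)) : Integrable (fun x => f x * (h : G →ᵇ ℂ) x) μ := by
  have hm : AEStronglyMeasurable (fun x => (h : G →ᵇ ℂ) x) μ :=
    ((h : G →ᵇ ℂ).continuous.aestronglyMeasurable)
  have := hf.bdd_mul hm (Filter.Eventually.of_forall fun x => (h : G →ᵇ ℂ).norm_coe_le_norm x)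
  simpa [mul_comm] using this

/-- A function `f ∈ L¹(G,μ)` viewed as the element `h ↦ ∫ f·h dμ` of `LUC(G)*`. -/
def integFunctional (μ : Measure G) (f : G → ℂ) (hf : Integrable f μ) : LUCDual G :=
  LinearMap.mkContinuous
    { toFun := fun h : ↥(LUC G) => ∫ x, f x * (h : G →ᵇ ℂ) x ∂μ
      map_add' := by
        intro h g
        have : (fun x => f x * ((h + g : ↥(LUC G)) : G →ᵇ ℂ) x)
            = fun x => f x * (h : G →ᵇ ℂ) x + f x * (g : G →ᵇ ℂ) x := by
          funext x
          simp [mul_add]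
        show (∫ x, f x * ((h + g : ↥(LUC G)) : G →ᵇ ℂ) x ∂μ)
            = (∫ x, f x * (h : G →ᵇ ℂ) x ∂μ) + ∫ x, f x * (g : G →ᵇ ℂ) x ∂μ
        rw [this, integral_add (integrable_mul_luc μ hf h) (integrable_mul_luc μ hf g)]
      map_smul' := by
        intro c h
        have : (fun x => f x * ((c • h : ↥(LUC G)) : G →ᵇ ℂ) x)
            = fun x => c • (f x * (h : G →ᵇ ℂ) x) := by
          funext x
          simp [smul_eq_mul]
          ring
        show (∫ x, f x * ((c • h : ↥(LUC G)) : G →ᵇ ℂ) x ∂μ)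
            = c • ∫ x, f x * (h : G →ᵇ ℂ) x ∂μ
        rw [this, integral_smul] }
    (∫ x, ‖f x‖ ∂μ)
    (fun h => by
      calc ‖∫ x, f x * (h : G →ᵇ ℂ) x ∂μ‖ ≤ ∫ x, ‖f x * (h : G →ᵇ ℂ) x‖ ∂μ :=
            norm_integral_le_integral_norm _
        _ = ∫ x, ‖f x‖ * ‖(h : G →ᵇ ℂ) x‖ ∂μ := by simp [norm_mul]
        _ ≤ ∫ x, ‖f x‖ * ‖h‖ ∂μ := by
            apply integral_mono ((integrable_mul_luc μ hf h).norm.congr ?_)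
              (hf.norm.mul_const _)
            · intro x
              exact mul_le_mul_of_nonneg_left ((h : G →ᵇ ℂ).norm_coe_le_norm x)
                (norm_nonneg _)
            · filter_upwards with x
              simp [norm_mul]
        _ = (∫ x, ‖f x‖ ∂μ) * ‖h‖ := integral_mul_const _ _)

/-- An element of `LUC(G)*` given by a (complex) finite Radon measure, i.e. by a
linear combination of four finite inner-regular (w.r.t. compact sets) measures. -/
def IsRadonFunctional (m : LUCDual G) : Prop :=
  ∃ μ : Fin 4 → Measure G, (∀ i, IsFiniteMeasure (μ i)) ∧ (∀ i, (μ i).InnerRegular) ∧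
    ∀ f : ↥(LUC G), m f =
      ((∫ x, (f : G →ᵇ ℂ) x ∂(μ 0)) - ∫ x, (f : G →ᵇ ℂ) x ∂(μ 1))
        + Complex.I * ((∫ x, (f : G →ᵇ ℂ) x ∂(μ 2)) - ∫ x, (f : G →ᵇ ℂ) x ∂(μ 3))

/-- The convolution `f ∗ g (s) = ∫ f(st) g(t⁻¹) dμ(t)` of two functions. -/
def convFun (μ : Measure G) (f g : G → ℂ) : G → ℂ :=
  fun s => ∫ t, f (s * t) * g t⁻¹ ∂μ

/-- Membership in the centre of the convolution algebra `L¹(G,μ)`. -/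
def InCenterL1 (μ : Measure G) (h : G → ℂ) : Prop :=
  Integrable h μ ∧
    ∀ g : G → ℂ, Integrable g μ → convFun μ h g =ᵐ[μ] convFun μ g h

end MeasureStuff

section AuxProof

variable {G : Type*} [Group G] [TopologicalSpace G] [IsTopologicalGroup G]

/-- Uniform conjugation control on a compact set. -/
lemma exists_conj_nhds {K : Set G} (hK : IsCompact K) {V : Set G} (hV : V ∈ 𝓝 (1 : G)) :
    ∃ U ∈ 𝓝 (1 : G), ∀ s ∈ K, ∀ u ∈ U, s * u * s⁻¹ ∈ V := by
  have key : ∀ s : G, ∃ W ∈ 𝓝 s, ∃ U ∈ 𝓝 (1 : G), ∀ a ∈ W, ∀ u ∈ U, a * u * a⁻¹ ∈ V := by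
    intro s
    have hc : ContinuousAt (fun p : G × G => p.1 * p.2 * p.1⁻¹) (s, 1) := by fun_prop
    have hmem : (fun p : G × G => p.1 * p.2 * p.1⁻¹) ⁻¹' V ∈ 𝓝 ((s, 1) : G × G) :=
      hc.preimage_mem_nhds (by simpa using hV)
    rw [nhds_prod_eq, Filter.mem_prod_iff] at hmem
    obtain ⟨W, hW, U, hU, hsub⟩ := hmem
    exact ⟨W, hW, U, hU, fun a ha u hu => hsub (Set.mk_mem_prod ha hu)⟩
  choose W hW U hU hWU using key
  obtain ⟨t, _, ht⟩ := hK.elim_nhds_subcover W (fun s _ => hW s)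
  refine ⟨⋂ x ∈ t, U x, (Filter.biInter_finset_mem t).2 fun x _ => hU x, fun s hs u hu => ?_⟩
  obtain ⟨x, hxt, hsx⟩ := Set.mem_iUnion₂.1 (ht hs)
  exact hWU x s hsx u (Set.mem_iInter₂.1 hu x hxt)

lemma exists_compact_measure_univ_le [MeasurableSpace G]
    (μ : MeasureTheory.Measure G) [IsFiniteMeasure μ] (hreg : μ.InnerRegular) {η : ℝ}
    (hη : 0 < η) :
    ∃ K : Set G, IsCompact K ∧ μ Set.univ ≤ μ K + ENNReal.ofReal η := by
  by_cases h : μ Set.univ ≤ ENNReal.ofReal η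
  · exact ⟨∅, isCompact_empty, h.trans le_add_self⟩
  · push_neg at h
    have hη' : ENNReal.ofReal η ≠ 0 := by
      simp [ENNReal.ofReal_eq_zero, not_le, hη]
    have h0 : μ Set.univ ≠ 0 := by
      intro h0; rw [h0] at h; exact (not_lt_of_ge zero_le) h
    have hr : μ Set.univ - ENNReal.ofReal η < μ Set.univ :=
      ENNReal.sub_lt_self (measure_ne_top _ _) h0 hη'
    obtain ⟨K, -, hKc, hKm⟩ := hreg.innerRegular MeasurableSet.univ _ hr
    refine ⟨K, hKc, ?_⟩
    have : μ Set.univ - ENNReal.ofReal η + ENNReal.ofReal η = μ Set.univ :=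
      tsub_add_cancel_of_le h.le
    calc μ Set.univ = μ Set.univ - ENNReal.ofReal η + ENNReal.ofReal η := this.symm
      _ ≤ μ K + ENNReal.ofReal η := add_le_add_left hKm.le _

lemma integral_norm_bcf_le [MeasurableSpace G] [BorelSpace G]
    (μ : MeasureTheory.Measure G) [IsFiniteMeasure μ] (g : G →ᵇ ℂ) {δ M : ℝ} (hδ : 0 < δ)
    (hM0 : 0 ≤ M) (hM : ‖g‖ ≤ M) (K : Set G) (hK : ∀ s ∈ K, ‖g s‖ < δ) :
    ∫ x, ‖g x‖ ∂μ ≤ δ * (μ Set.univ).toReal + M * (μ Set.univ - μ K).toReal := by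
  set S : Set G := {x | δ ≤ ‖g x‖} with hSdef
  have hSc : IsClosed S := isClosed_le continuous_const g.continuous.norm
  have hSm : MeasurableSet S := hSc.measurableSet
  have hKS : K ⊆ Sᶜ := by
    intro x hx
    simp only [Set.mem_compl_iff, hSdef, Set.mem_setOf_eq, not_le]
    exact hK x hx
  have hμS : μ S ≤ μ Set.univ - μ K := by
    have h1 : μ S = μ Set.univ - μ Sᶜ := by
      have := measure_compl hSm.compl (measure_ne_top μ _)
      rwa [compl_compl] at this
    rw [h1]
    exact tsub_le_tsub_left (measure_mono hKS) _
  have hint1 : Integrable (fun x => ‖g x‖) μ := (g.integrable μ).norm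
  have hint2 : Integrable (fun x => δ + S.indicator (fun _ => M) x) μ :=
    (integrable_const δ).add ((integrable_const M).indicator hSm)
  have hle : ∀ x, ‖g x‖ ≤ δ + S.indicator (fun _ => M) x := by
    intro x
    by_cases hx : x ∈ S
    · have : ‖g x‖ ≤ M := (g.norm_coe_le_norm x).trans hM
      simp only [Set.indicator_of_mem hx]
      linarith
    · have : ‖g x‖ < δ := by
        simp only [hSdef, Set.mem_setOf_eq, not_le] at hx; exact hx
      simp only [Set.indicator_of_notMem hx]
      linarith
  calc ∫ x, ‖g x‖ ∂μ ≤ ∫ x, (δ + S.indicator (fun _ => M) x) ∂μ :=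
        integral_mono hint1 hint2 hle
    _ = δ * (μ Set.univ).toReal + M * (μ S).toReal := by
        rw [integral_add (integrable_const δ) ((integrable_const M).indicator hSm),
          integral_const, integral_indicator_const _ hSm]
        simp [mul_comm]
        rfl
    _ ≤ δ * (μ Set.univ).toReal + M * (μ Set.univ - μ K).toReal := by
        have h2 : (μ S).toReal ≤ (μ Set.univ - μ K).toReal :=
          ENNReal.toReal_mono (ne_top_of_le_ne_top (measure_ne_top μ _) tsub_le_self) hμS
        have := mul_le_mul_of_nonneg_left h2 hM0
        linarith

end AuxProof

set_option maxHeartbeats 1000000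

/-- **Theorem (paper Thm 5.4, case (a)).** Convolution on `LUC(G)*` is jointly
UEB continuous at `(m₀, n₀)` where `m₀ ∈ M(G)` and the right arguments stay in a
norm-bounded set `B`. -/
theorem conv_UEB_jointly_continuous_at_radon
    (G : Type*) [Group G] [TopologicalSpace G] [IsTopologicalGroup G]
    [MeasurableSpace G] [BorelSpace G]
    {ι : Type*} (l : Filter ι)
    (mα nα : ι → LUCDual G) (m₀ n₀ : LUCDual G)
    (B : Set (LUCDual G)) (hBbdd : ∃ C, ∀ n ∈ B, ‖n‖ ≤ C)
    (hm₀ : IsRadonFunctional m₀) (hn₀ : n₀ ∈ B) (hnB : ∀ i, nα i ∈ B)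
    (hm : UEBTendsto G l mα m₀) (hn : UEBTendsto G l nα n₀) :
    UEBTendsto G l (fun i => conv (mα i) (nα i)) (conv m₀ n₀) := by
  intro F hF ε hε
  obtain ⟨CB0, hCB0⟩ := hBbdd
  set CB : ℝ := max CB0 0 with hCBdef
  have hCB : ∀ n ∈ B, ‖n‖ ≤ CB := fun n hn => (hCB0 n hn).trans (le_max_left _ _)
  have hCB0' : (0 : ℝ) ≤ CB := le_max_right _ _
  obtain ⟨⟨CF0, hCF0⟩, hFeq⟩ := hF
  set CF : ℝ := max CF0 0 with hCFdef
  have hCF : ∀ f ∈ F, ‖f‖ ≤ CF := fun f hf => (hCF0 f hf).trans (le_max_left _ _)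
  have hCF0' : (0 : ℝ) ≤ CF := le_max_right _ _
  -- key sup-norm estimate for translates
  have htrans : ∀ {δ : ℝ}, 0 < δ → ∀ {U : Set G},
      (∀ f ∈ F, ∀ s t : G, s * t⁻¹ ∈ U → ‖(f : G →ᵇ ℂ) s - (f : G →ᵇ ℂ) t‖ < δ) →
      ∀ f ∈ F, ∀ s t : G, s * t⁻¹ ∈ U → ‖lTrans s f - lTrans t f‖ ≤ δ := by
    intro δ hδ U hU f hf s t hst
    show ‖((lTrans s f : ↥(LUC G)) : G →ᵇ ℂ) - ((lTrans t f : ↥(LUC G)) : G →ᵇ ℂ)‖ ≤ δ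
    refine (BoundedContinuousFunction.norm_le hδ.le).2 fun x => ?_
    have hx : (s * x) * (t * x)⁻¹ ∈ U := by
      simpa [mul_inv_rev, mul_assoc] using hst
    simpa using (hU f hf (s * x) (t * x) hx).le
  -- the set F' = {rAct n f : n ∈ B, f ∈ F} is equi-LUC
  set F' : Set ↥(LUC G) := {h | ∃ n ∈ B, ∃ f ∈ F, h = rAct n f} with hF'def
  have hF' : EquiLUC G F' := by
    constructor
    · refine ⟨CB * CF, ?_⟩
      rintro h ⟨n, hn, f, hf, rfl⟩
      calc ‖rAct n f‖ ≤ ‖n‖ * ‖f‖ := rAct_norm_le n f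
        _ ≤ CB * CF := mul_le_mul (hCB n hn) (hCF f hf) (norm_nonneg _) hCB0'
    · intro ε' hε'
      obtain ⟨U, hUmem, hU⟩ := hFeq (ε' / (2 * (CB + 1))) (by positivity)
      refine ⟨U, hUmem, ?_⟩
      rintro h ⟨n, hn, f, hf, rfl⟩ s t hst
      have h1 : ((rAct n f : ↥(LUC G)) : G →ᵇ ℂ) s - ((rAct n f : ↥(LUC G)) : G →ᵇ ℂ) t
          = n (lTrans s f - lTrans t f) := by
        simp [rAct_apply, map_sub]
      rw [h1]
      have h2 : ‖lTrans s f - lTrans t f‖ ≤ ε' / (2 * (CB + 1)) :=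
        htrans (by positivity) hU f hf s t hst
      calc ‖n (lTrans s f - lTrans t f)‖ ≤ ‖n‖ * ‖lTrans s f - lTrans t f‖ := n.le_opNorm _
        _ ≤ CB * (ε' / (2 * (CB + 1))) :=
            mul_le_mul (hCB n hn) h2 (norm_nonneg _) hCB0'
        _ < (CB + 1) * (ε' / (2 * (CB + 1))) :=
            mul_lt_mul_of_pos_right (by linarith) (by positivity)
        _ = ε' / 2 := by field_simp
        _ < ε' := by linarith
  -- the measures representing m₀
  obtain ⟨μ, hfin, hreg, hformula⟩ := hm₀
  haveI h0' : IsFiniteMeasure (μ 0) := hfin 0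
  haveI h1' : IsFiniteMeasure (μ 1) := hfin 1
  haveI h2' : IsFiniteMeasure (μ 2) := hfin 2
  haveI h3' : IsFiniteMeasure (μ 3) := hfin 3
  set M₀ : ℝ := 2 * CB * CF with hM₀def
  have hM₀0 : (0 : ℝ) ≤ M₀ := by positivity
  set η : ℝ := ε / (16 * (M₀ + 1)) with hηdef
  have hη : 0 < η := by positivity
  have hKex : ∀ j : Fin 4, ∃ K : Set G, IsCompact K ∧
      μ j Set.univ ≤ μ j K + ENNReal.ofReal η := by
    intro j
    haveI := hfin j
    exact exists_compact_measure_univ_le (μ j) (hreg j) hη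
  choose K hKc hKm using hKex
  set Kt : Set G := K 0 ∪ K 1 ∪ K 2 ∪ K 3 with hKtdef
  have hKtc : IsCompact Kt := (((hKc 0).union (hKc 1)).union (hKc 2)).union (hKc 3)
  have hKtm : ∀ j : Fin 4, μ j Set.univ ≤ μ j Kt + ENNReal.ofReal η := by
    intro j
    refine (hKm j).trans (add_le_add_left (measure_mono ?_) _)
    fin_cases j
    · exact fun x hx => Or.inl (Or.inl (Or.inl hx))
    · exact fun x hx => Or.inl (Or.inl (Or.inr hx))
    · exact fun x hx => Or.inl (Or.inr hx)
    · exact fun x hx => Or.inr hx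
  set T : ℝ := (μ 0 Set.univ).toReal + (μ 1 Set.univ).toReal + (μ 2 Set.univ).toReal
      + (μ 3 Set.univ).toReal with hTdef
  have hT0 : (0 : ℝ) ≤ T := by positivity
  set δ : ℝ := ε / (8 * (T + 1)) with hδdef
  have hδ : 0 < δ := by positivity
  -- the set L = {lTrans s f : s ∈ Kt, f ∈ F} is equi-LUC
  set L : Set ↥(LUC G) := {h | ∃ s ∈ Kt, ∃ f ∈ F, h = lTrans s f} with hLdef
  have hL : EquiLUC G L := by
    constructor
    · refine ⟨CF, ?_⟩
      rintro h ⟨s, hs, f, hf, rfl⟩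
      exact (lTrans_norm_le s f).trans (hCF f hf)
    · intro ε' hε'
      obtain ⟨V, hVmem, hV⟩ := hFeq ε' hε'
      obtain ⟨U, hUmem, hU⟩ := exists_conj_nhds hKtc hVmem
      refine ⟨U, hUmem, ?_⟩
      rintro h ⟨s₀, hs₀, f, hf, rfl⟩ x y hxy
      have hconj : (s₀ * x) * (s₀ * y)⁻¹ ∈ V := by
        have := hU s₀ hs₀ (x * y⁻¹) hxy
        simpa [mul_inv_rev, mul_assoc] using this
      simpa using hV f hf (s₀ * x) (s₀ * y) hconj
  -- combine the two eventual statements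
  have ev1 := hm F' hF' (ε / 2) (by linarith)
  have ev2 := hn L hL δ hδ
  filter_upwards [ev1, ev2] with i hi1 hi2
  intro f hf
  -- term 1
  have hterm1 : ‖mα i (rAct (nα i) f) - m₀ (rAct (nα i) f)‖ < ε / 2 :=
    hi1 _ ⟨nα i, hnB i, f, hf, rfl⟩
  -- term 2
  set g : ↥(LUC G) := rAct (nα i) f - rAct n₀ f with hgdef
  have hgapp : ∀ s : G, ((g : ↥(LUC G)) : G →ᵇ ℂ) s
      = nα i (lTrans s f) - n₀ (lTrans s f) := by
    intro s
    simp [hgdef]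
  have hgK : ∀ s ∈ Kt, ‖((g : ↥(LUC G)) : G →ᵇ ℂ) s‖ < δ := by
    intro s hs
    rw [hgapp s]
    exact hi2 (lTrans s f) ⟨s, hs, f, hf, rfl⟩
  have hgM : ‖((g : ↥(LUC G)) : G →ᵇ ℂ)‖ ≤ M₀ := by
    have h1 : ‖g‖ ≤ ‖rAct (nα i) f‖ + ‖rAct n₀ f‖ := norm_sub_le _ _
    have h2 : ‖rAct (nα i) f‖ ≤ CB * CF :=
      (rAct_norm_le _ _).trans (mul_le_mul (hCB _ (hnB i)) (hCF f hf) (norm_nonneg _) hCB0')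
    have h3 : ‖rAct n₀ f‖ ≤ CB * CF :=
      (rAct_norm_le _ _).trans (mul_le_mul (hCB _ hn₀) (hCF f hf) (norm_nonneg _) hCB0')
    show ‖g‖ ≤ M₀
    rw [hM₀def]
    linarith
  have hint : ∀ j : Fin 4, ∫ x, ‖((g : ↥(LUC G)) : G →ᵇ ℂ) x‖ ∂(μ j)
      ≤ δ * (μ j Set.univ).toReal + M₀ * η := by
    intro j
    haveI := hfin j
    have h1 := integral_norm_bcf_le (μ j) ((g : ↥(LUC G)) : G →ᵇ ℂ) hδ hM₀0 hgM Kt hgK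
    refine h1.trans (add_le_add_right (mul_le_mul_of_nonneg_left ?_ hM₀0) _)
    have hsub : μ j Set.univ - μ j Kt ≤ ENNReal.ofReal η := tsub_le_iff_left.2 (hKtm j)
    calc (μ j Set.univ - μ j Kt).toReal ≤ (ENNReal.ofReal η).toReal :=
          ENNReal.toReal_mono ENNReal.ofReal_ne_top hsub
      _ = η := ENNReal.toReal_ofReal hη.le
  have hbound : ∀ j : Fin 4, ‖∫ x, ((g : ↥(LUC G)) : G →ᵇ ℂ) x ∂(μ j)‖
      ≤ δ * (μ j Set.univ).toReal + M₀ * η := by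
    intro j
    haveI := hfin j
    exact (norm_integral_le_integral_norm _).trans (hint j)
  have hterm2 : ‖m₀ g‖ ≤ 3 * ε / 8 := by
    rw [hformula g]
    set I : Fin 4 → ℂ := fun j => ∫ x, ((g : ↥(LUC G)) : G →ᵇ ℂ) x ∂(μ j) with hIdef
    have e0 := hbound 0
    have e1 := hbound 1
    have e2 := hbound 2
    have e3 := hbound 3
    have hI : ‖Complex.I * (I 2 - I 3)‖ = ‖I 2 - I 3‖ := by
      rw [norm_mul, Complex.norm_I, one_mul]
    have htotal : ‖(I 0 - I 1) + Complex.I * (I 2 - I 3)‖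
        ≤ (‖I 0‖ + ‖I 1‖) + (‖I 2‖ + ‖I 3‖) := by
      calc ‖(I 0 - I 1) + Complex.I * (I 2 - I 3)‖
          ≤ ‖I 0 - I 1‖ + ‖Complex.I * (I 2 - I 3)‖ := norm_add_le _ _
        _ ≤ (‖I 0‖ + ‖I 1‖) + (‖I 2‖ + ‖I 3‖) := by
            rw [hI]
            exact add_le_add (norm_sub_le _ _) (norm_sub_le _ _)
    clear_value CB CF M₀ η T δ
    have hTsplit : δ * T = δ * (μ 0 Set.univ).toReal + δ * (μ 1 Set.univ).toReal
        + δ * (μ 2 Set.univ).toReal + δ * (μ 3 Set.univ).toReal := by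
      rw [hTdef]; ring
    have hδT : δ * T ≤ ε / 8 := by
      have h1 : δ * (T + 1) = ε / 8 := by
        rw [hδdef]; field_simp
      nlinarith [hδ.le, hT0]
    have hMη : 4 * (M₀ * η) ≤ ε / 4 := by
      have h1 : η * (M₀ + 1) = ε / 16 := by
        rw [hηdef]; field_simp
      nlinarith [hη.le, hM₀0]
    show ‖(I 0 - I 1) + Complex.I * (I 2 - I 3)‖ ≤ 3 * ε / 8
    linarith [htotal]
  -- conclusion
  have hsplit : conv (mα i) (nα i) f - conv m₀ n₀ f
      = (mα i (rAct (nα i) f) - m₀ (rAct (nα i) f)) + m₀ g := by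
    simp only [conv_apply, hgdef, map_sub]
    ring
  calc ‖conv (mα i) (nα i) f - conv m₀ n₀ f‖
      ≤ ‖mα i (rAct (nα i) f) - m₀ (rAct (nα i) f)‖ + ‖m₀ g‖ := by
        rw [hsplit]; exact norm_add_le _ _
    _ < ε / 2 + 3 * ε / 8 := by
        exact add_lt_add_of_lt_of_le hterm1 hterm2
    _ ≤ ε := by linarith
end
end

section
/- Let G be a SIN group, B ⊆ LUC(G)* a norm-bounded set, m₀ ∈ LUC(G)*, and n₀ ∈ B. Then the convolution map (m, n) ↦ m ∗ n from LUC(G)* × B to LUC(G)* is jointly continuous at (m₀, n₀) when all spaces carry the UEB topology; that is, if m_α → m₀ and n_α → n₀ in the UEB topology with n_α ∈ B, then m_α ∗ n_α → m₀ ∗ n₀ in the UEB topology. -/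
noncomputable section
set_option linter.unusedSectionVars false

open Filter Topology MeasureTheory BoundedContinuousFunction

section Aux

variable {G : Type*} [Group G] [TopologicalSpace G] [IsTopologicalGroup G]

lemma equiLUC_lTrans_family (hSIN : IsSIN G) {F : Set ↥(LUC G)} (hF : EquiLUC G F) :
    EquiLUC G {g | ∃ s : G, ∃ f ∈ F, g = lTrans s f} := by
  obtain ⟨⟨C, hC⟩, hFuc⟩ := hF
  constructor
  · refine ⟨C, ?_⟩
    rintro g ⟨s, f, hf, rfl⟩
    exact le_trans (lTrans_norm_le s f) (hC f hf)
  · intro ε hε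
    obtain ⟨U, hU, hUf⟩ := hFuc ε hε
    obtain ⟨V, hV, hVU, hVinv⟩ := hSIN U hU
    refine ⟨V, hV, ?_⟩
    rintro g ⟨s, f, hf, rfl⟩ x y hxy
    have h' : (s * x) * (s * y)⁻¹ ∈ U := by
      have : s * (x * y⁻¹) * s⁻¹ ∈ V := hVinv s _ hxy
      have h2 : (s * x) * (s * y)⁻¹ ∈ V := by
        simpa [mul_inv_rev, mul_assoc] using this
      exact hVU h2
    simpa using hUf f hf (s * x) (s * y) h'

lemma equiLUC_rAct_family {B : Set (LUCDual G)} {CB : ℝ} (hCB0 : 0 ≤ CB)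
    (hCB : ∀ n ∈ B, ‖n‖ ≤ CB) {F : Set ↥(LUC G)} (hF : EquiLUC G F) :
    EquiLUC G {g | ∃ n ∈ B, ∃ f ∈ F, g = rAct n f} := by
  obtain ⟨⟨C, hC⟩, hFuc⟩ := hF
  constructor
  · refine ⟨CB * C, ?_⟩
    rintro g ⟨n, hn, f, hf, rfl⟩
    calc ‖rAct n f‖ ≤ ‖n‖ * ‖f‖ := rAct_norm_le n f
      _ ≤ CB * C := by
          have hf0 : (0 : ℝ) ≤ ‖f‖ := norm_nonneg _
          exact mul_le_mul (hCB n hn) (hC f hf) hf0 hCB0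
  · intro ε hε
    set δ := ε / (CB + 1) with hδdef
    have hδ : 0 < δ := by positivity
    obtain ⟨U, hU, hUf⟩ := hFuc δ hδ
    refine ⟨U, hU, ?_⟩
    rintro g ⟨n, hn, f, hf, rfl⟩ s t hst
    have hdiff : ‖lTrans s f - lTrans t f‖ ≤ δ := by
      show ‖((lTrans s f - lTrans t f : ↥(LUC G)) : G →ᵇ ℂ)‖ ≤ δ
      rw [AddSubgroupClass.coe_sub]
      refine (BoundedContinuousFunction.norm_le hδ.le).2 fun x => ?_
      have hx : (s * x) * (t * x)⁻¹ ∈ U := by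
        simpa [mul_inv_rev, mul_assoc] using hst
      simpa using (hUf f hf (s * x) (t * x) hx).le
    have key : ‖n (lTrans s f) - n (lTrans t f)‖ < ε := by
      calc ‖n (lTrans s f) - n (lTrans t f)‖ = ‖n (lTrans s f - lTrans t f)‖ := by
            rw [map_sub]
        _ ≤ ‖n‖ * ‖lTrans s f - lTrans t f‖ := n.le_opNorm _
        _ ≤ CB * δ := mul_le_mul (hCB n hn) hdiff (norm_nonneg _) hCB0
        _ < (CB + 1) * δ := mul_lt_mul_of_pos_right (by linarith) hδ
        _ = ε := by rw [hδdef]; field_simp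
    simpa using key

end Aux

/-- **Theorem (paper Thm 5.4, case (b)).** In a SIN group, convolution on `LUC(G)*`
is jointly UEB continuous at `(m₀, n₀)` where the right arguments stay in a
norm-bounded set `B`. -/
theorem conv_UEB_jointly_continuous_at_SIN
    (G : Type*) [Group G] [TopologicalSpace G] [IsTopologicalGroup G]
    (hSIN : IsSIN G)
    {ι : Type*} (l : Filter ι)
    (mα nα : ι → LUCDual G) (m₀ n₀ : LUCDual G)
    (B : Set (LUCDual G)) (hBbdd : ∃ C, ∀ n ∈ B, ‖n‖ ≤ C)
    (hn₀ : n₀ ∈ B) (hnB : ∀ i, nα i ∈ B)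
    (hm : UEBTendsto G l mα m₀) (hn : UEBTendsto G l nα n₀) :
    UEBTendsto G l (fun i => conv (mα i) (nα i)) (conv m₀ n₀) := by
  intro F hF ε hε
  obtain ⟨C, hC⟩ := hBbdd
  set CB := max C 0 with hCBdef
  have hCB0 : (0 : ℝ) ≤ CB := le_max_right _ _
  have hCB : ∀ n ∈ B, ‖n‖ ≤ CB := fun n hn => le_trans (hC n hn) (le_max_left _ _)
  have hF₁ := equiLUC_rAct_family hCB0 hCB hF
  have hF₂ := equiLUC_lTrans_family hSIN hF
  set δ := ε / (2 * (‖m₀‖ + 1)) with hδdef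
  have hδ : 0 < δ := by positivity
  filter_upwards [hm _ hF₁ (ε / 2) (by linarith), hn _ hF₂ δ hδ] with i h1 h2
  intro f hf
  have t1 : ‖mα i (rAct (nα i) f) - m₀ (rAct (nα i) f)‖ < ε / 2 :=
    h1 (rAct (nα i) f) ⟨nα i, hnB i, f, hf, rfl⟩
  have hdiff : ‖rAct (nα i) f - rAct n₀ f‖ ≤ δ := by
    show ‖((rAct (nα i) f - rAct n₀ f : ↥(LUC G)) : G →ᵇ ℂ)‖ ≤ δ
    rw [AddSubgroupClass.coe_sub]
    refine (BoundedContinuousFunction.norm_le hδ.le).2 fun x => ?_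
    have := h2 (lTrans x f) ⟨x, f, hf, rfl⟩
    simpa using this.le
  have t2 : ‖m₀ (rAct (nα i) f) - m₀ (rAct n₀ f)‖ < ε / 2 := by
    calc ‖m₀ (rAct (nα i) f) - m₀ (rAct n₀ f)‖
        = ‖m₀ (rAct (nα i) f - rAct n₀ f)‖ := by rw [map_sub]
      _ ≤ ‖m₀‖ * ‖rAct (nα i) f - rAct n₀ f‖ := m₀.le_opNorm _
      _ ≤ ‖m₀‖ * δ := mul_le_mul_of_nonneg_left hdiff (norm_nonneg m₀)
      _ < (‖m₀‖ + 1) * δ := mul_lt_mul_of_pos_right (by linarith) hδ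
      _ = ε / 2 := by rw [hδdef]; field_simp
  have e : conv (mα i) (nα i) f - conv m₀ n₀ f
      = (mα i (rAct (nα i) f) - m₀ (rAct (nα i) f))
        + (m₀ (rAct (nα i) f) - m₀ (rAct n₀ f)) := by
    simp only [conv_apply]; ring
  calc ‖conv (mα i) (nα i) f - conv m₀ n₀ f‖
      ≤ ‖mα i (rAct (nα i) f) - m₀ (rAct (nα i) f)‖
        + ‖m₀ (rAct (nα i) f) - m₀ (rAct n₀ f)‖ := by rw [e]; exact norm_add_le _ _
    _ < ε := by linarith
end
end

section
/- For every locally compact SIN group G, the convolution map (m, n) ↦ m ∗ n is jointly continuous on all of LUC(G)* × LUC(G)* when LUC(G)* carries the UEB topology (no boundedness restriction). -/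
noncomputable section
set_option linter.unusedSectionVars false

open Filter Topology MeasureTheory BoundedContinuousFunction

section ProofAux

variable {G : Type*} [Group G] [TopologicalSpace G] [IsTopologicalGroup G]

lemma luc_norm_le {f : ↥(LUC G)} {c : ℝ} (hc : 0 ≤ c)
    (h : ∀ x, ‖(f : G →ᵇ ℂ) x‖ ≤ c) : ‖f‖ ≤ c := by
  change ‖(f : G →ᵇ ℂ)‖ ≤ c
  exact (BoundedContinuousFunction.norm_le hc).2 h

lemma luc_norm_apply_le (f : ↥(LUC G)) (x : G) : ‖(f : G →ᵇ ℂ) x‖ ≤ ‖f‖ :=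
  BoundedContinuousFunction.norm_coe_le_norm _ _

lemma luc_sub_apply (f g : ↥(LUC G)) (x : G) :
    ((f - g : ↥(LUC G)) : G →ᵇ ℂ) x = (f : G →ᵇ ℂ) x - (g : G →ᵇ ℂ) x := rfl

lemma luc_smul_apply (c : ℂ) (f : ↥(LUC G)) (x : G) :
    ((c • f : ↥(LUC G)) : G →ᵇ ℂ) x = c * (f : G →ᵇ ℂ) x := rfl

lemma lTrans_sub (s : G) (f g : ↥(LUC G)) :
    lTrans s (f - g) = lTrans s f - lTrans s g := by
  apply Subtype.ext; ext x; rfl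

lemma lTrans_neg (s : G) (f : ↥(LUC G)) :
    lTrans s (-f) = - lTrans s f := by
  apply Subtype.ext; ext x; rfl

lemma lTrans_shift (s t : G) (f : ↥(LUC G)) :
    lTrans s f - lTrans t f = lTrans t (lTrans (s * t⁻¹) f - f) := by
  apply Subtype.ext; ext x
  show (f : G →ᵇ ℂ) (s * x) - (f : G →ᵇ ℂ) (t * x)
      = (f : G →ᵇ ℂ) (s * t⁻¹ * (t * x)) - (f : G →ᵇ ℂ) (t * x)
  congr 2
  group

lemma rAct_sub_left (n n₀ : LUCDual G) (f : ↥(LUC G)) :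
    rAct (n - n₀) f = rAct n f - rAct n₀ f := by
  apply Subtype.ext; ext s
  show (n - n₀) (lTrans s f) = n (lTrans s f) - n₀ (lTrans s f)
  rfl

lemma equiLUC_rAct_image (n₀ : LUCDual G) {F : Set ↥(LUC G)} (hF : EquiLUC G F) :
    EquiLUC G (rAct n₀ '' F) := by
  obtain ⟨C, hC⟩ := hF
  constructor
  · obtain ⟨c, hc⟩ := C
    refine ⟨‖n₀‖ * max c 0, ?_⟩
    rintro h ⟨f, hf, rfl⟩
    calc ‖rAct n₀ f‖ ≤ ‖n₀‖ * ‖f‖ := rAct_norm_le _ _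
      _ ≤ ‖n₀‖ * max c 0 :=
          mul_le_mul_of_nonneg_left ((hc f hf).trans (le_max_left _ _)) (norm_nonneg n₀)
  · intro ε hε
    obtain ⟨U, hU, hUosc⟩ := hC (ε / (‖n₀‖ + 1)) (by positivity)
    refine ⟨U, hU, ?_⟩
    rintro h ⟨f, hf, rfl⟩ s t hst
    rw [rAct_apply, rAct_apply, ← map_sub]
    have hnorm : ‖lTrans s f - lTrans t f‖ ≤ ε / (‖n₀‖ + 1) := by
      apply luc_norm_le (by positivity)
      intro x
      rw [luc_sub_apply, lTrans_apply, lTrans_apply]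
      have hx : (s * x) * (t * x)⁻¹ ∈ U := by
        have e : (s * x) * (t * x)⁻¹ = s * t⁻¹ := by group
        rw [e]; exact hst
      exact (hUosc f hf _ _ hx).le
    calc ‖n₀ (lTrans s f - lTrans t f)‖ ≤ ‖n₀‖ * ‖lTrans s f - lTrans t f‖ := n₀.le_opNorm _
      _ ≤ ‖n₀‖ * (ε / (‖n₀‖ + 1)) := mul_le_mul_of_nonneg_left hnorm (norm_nonneg n₀)
      _ < (‖n₀‖ + 1) * (ε / (‖n₀‖ + 1)) :=
          mul_lt_mul_of_pos_right (by linarith) (by positivity)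
      _ = ε := by field_simp

lemma osc_inv (hSIN : IsSIN G) {F : Set ↥(LUC G)} (hF : EquiLUC G F) :
    ∀ ε > 0, ∃ U ∈ 𝓝 (1 : G), (∀ x : G, ∀ u ∈ U, x * u * x⁻¹ ∈ U) ∧ (∀ u ∈ U, u⁻¹ ∈ U) ∧
      ∀ f ∈ F, ∀ s t : G, s * t⁻¹ ∈ U → ‖(f : G →ᵇ ℂ) s - (f : G →ᵇ ℂ) t‖ < ε := by
  intro ε hε
  obtain ⟨U₀, hU₀, hU₀f⟩ := hF.2 ε hε
  obtain ⟨V, hV, hVU, hVinv⟩ := hSIN U₀ hU₀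
  refine ⟨V ∩ V⁻¹, Filter.inter_mem hV (inv_mem_nhds_one G hV), ?_, ?_, ?_⟩
  · rintro x u ⟨hu1, hu2⟩
    refine ⟨hVinv x u hu1, ?_⟩
    have : (x * u * x⁻¹)⁻¹ = x * u⁻¹ * x⁻¹ := by group
    show (x * u * x⁻¹)⁻¹ ∈ V
    rw [this]
    exact hVinv x u⁻¹ (Set.mem_inv.1 hu2)
  · rintro u ⟨hu1, hu2⟩
    exact ⟨Set.mem_inv.1 hu2, by simpa using hu1⟩
  · rintro f hf s t hst
    exact hU₀f f hf s t (hVU hst.1)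

lemma core (hSIN : IsSIN G) {F : Set ↥(LUC G)} (hF : EquiLUC G F) :
    ∃ D : Set ↥(LUC G), EquiLUC G D ∧
      (∀ f ∈ F, ∀ s : G, lTrans s f ∈ D) ∧
      EquiLUC G {h : ↥(LUC G) | ∃ q : LUCDual G, ∃ f ∈ F,
        (∀ d ∈ D, ‖q d‖ ≤ 1) ∧ h = rAct q f} := by
  obtain ⟨C, hC⟩ := hF.1
  have hC' : ∀ f ∈ F, ‖f‖ ≤ max C 0 := fun f hf => (hC f hf).trans (le_max_left _ _)
  choose W hWnhds hWconj hWsym hWosc using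
    fun k : ℕ => osc_inv hSIN hF ((2⁻¹ : ℝ) ^ k * (2⁻¹ : ℝ) ^ k) (by positivity)
  set F₁ : Set ↥(LUC G) := {h | ∃ f ∈ F, ∃ s : G, h = lTrans s f} with hF₁def
  set F₂ : ℕ → Set ↥(LUC G) :=
    fun k => {h | ∃ f ∈ F, ∃ t : G, ∃ w ∈ W k, h = (2 : ℂ) ^ k • lTrans t (f - lTrans w f)}
    with hF₂def
  set D := F₁ ∪ ⋃ k, F₂ k with hDdef
  have hnorm2 : ∀ k : ℕ, ‖(2 : ℂ) ^ k‖ = (2 : ℝ) ^ k := by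
    intro k; rw [norm_pow]; norm_num
  have hF₂norm : ∀ k, ∀ h ∈ F₂ k, ‖h‖ ≤ (2⁻¹ : ℝ) ^ k := by
    rintro k h ⟨f, hf, t, w, hw, rfl⟩
    have hb : ‖lTrans t (f - lTrans w f)‖ ≤ (2⁻¹ : ℝ) ^ k * (2⁻¹ : ℝ) ^ k := by
      apply luc_norm_le (by positivity)
      intro x
      rw [lTrans_apply, luc_sub_apply, lTrans_apply]
      have hx : (t * x) * (w * (t * x))⁻¹ ∈ W k := by
        have e : (t * x) * (w * (t * x))⁻¹ = w⁻¹ := by group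
        rw [e]; exact hWsym k w hw
      exact (hWosc k f hf _ _ hx).le
    calc ‖(2 : ℂ) ^ k • lTrans t (f - lTrans w f)‖
        = (2 : ℝ) ^ k * ‖lTrans t (f - lTrans w f)‖ := by
          rw [show ‖(2 : ℂ) ^ k • lTrans t (f - lTrans w f)‖
              = ‖(2 : ℂ) ^ k • ((lTrans t (f - lTrans w f) : ↥(LUC G)) : G →ᵇ ℂ)‖ from rfl,
            norm_smul, hnorm2]
          rfl
      _ ≤ (2 : ℝ) ^ k * ((2⁻¹ : ℝ) ^ k * (2⁻¹ : ℝ) ^ k) :=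
          mul_le_mul_of_nonneg_left hb (by positivity)
      _ = (2⁻¹ : ℝ) ^ k := by
          rw [← mul_assoc, ← mul_pow]; norm_num
  have hDbound : ∀ h ∈ D, ‖h‖ ≤ max (max C 0) 1 := by
    rintro h (⟨f, hf, s, rfl⟩ | hmem)
    · exact ((lTrans_norm_le s f).trans (hC' f hf)).trans (le_max_left _ _)
    · obtain ⟨k, hk⟩ := Set.mem_iUnion.1 hmem
      refine ((hF₂norm k h hk).trans ?_).trans (le_max_right _ _)
      exact pow_le_one₀ (by norm_num) (by norm_num)
  have hDequi : EquiLUC G D := by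
    refine ⟨⟨max (max C 0) 1, hDbound⟩, ?_⟩
    intro ε hε
    obtain ⟨k₀, hk₀⟩ : ∃ k₀ : ℕ, (2⁻¹ : ℝ) ^ k₀ < ε / 2 :=
      exists_pow_lt_of_lt_one (by positivity) (by norm_num)
    have hδ'pos : (0 : ℝ) < ε / 2 ^ (k₀ + 1) := by positivity
    obtain ⟨U, hU, hUconj, hUsym, hUosc⟩ := osc_inv hSIN hF _ hδ'pos
    refine ⟨U, hU, ?_⟩
    rintro h (⟨f, hf, s, rfl⟩ | hmem) x y hxy
    · rw [lTrans_apply, lTrans_apply]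
      have hmemU : (s * x) * (s * y)⁻¹ ∈ U := by
        have e : (s * x) * (s * y)⁻¹ = s * (x * y⁻¹) * s⁻¹ := by group
        rw [e]; exact hUconj s _ hxy
      exact (hUosc f hf _ _ hmemU).trans_le
        (div_le_self hε.le (one_le_pow₀ (by norm_num)))
    · obtain ⟨k, hk⟩ := Set.mem_iUnion.1 hmem
      by_cases hkk : k₀ ≤ k
      · have h1 : ‖(h : G →ᵇ ℂ) x - (h : G →ᵇ ℂ) y‖ ≤ 2 * ((2⁻¹ : ℝ) ^ k) := by
          have := hF₂norm k h hk
          have hx := (luc_norm_apply_le h x).trans this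
          have hy := (luc_norm_apply_le h y).trans this
          calc ‖(h : G →ᵇ ℂ) x - (h : G →ᵇ ℂ) y‖ ≤ ‖(h : G →ᵇ ℂ) x‖ + ‖(h : G →ᵇ ℂ) y‖ :=
                norm_sub_le _ _
            _ ≤ 2 * ((2⁻¹ : ℝ) ^ k) := by linarith
        refine h1.trans_lt ?_
        have h2 : (2⁻¹ : ℝ) ^ k ≤ (2⁻¹ : ℝ) ^ k₀ :=
          pow_le_pow_of_le_one (by norm_num) (by norm_num) hkk
        linarith
      · push_neg at hkk
        obtain ⟨f, hf, t, w, hw, rfl⟩ := hk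
        have e : (((2 : ℂ) ^ k • lTrans t (f - lTrans w f) : ↥(LUC G)) : G →ᵇ ℂ) x
            - (((2 : ℂ) ^ k • lTrans t (f - lTrans w f) : ↥(LUC G)) : G →ᵇ ℂ) y
            = (2 : ℂ) ^ k * (((f : G →ᵇ ℂ) (t * x) - (f : G →ᵇ ℂ) (t * y))
              - ((f : G →ᵇ ℂ) (w * (t * x)) - (f : G →ᵇ ℂ) (w * (t * y)))) := by
          rw [luc_smul_apply, luc_smul_apply, lTrans_apply, lTrans_apply,
            luc_sub_apply, luc_sub_apply, lTrans_apply, lTrans_apply]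
          ring
        rw [e, norm_mul, hnorm2]
        have hm1 : (t * x) * (t * y)⁻¹ ∈ U := by
          have e1 : (t * x) * (t * y)⁻¹ = t * (x * y⁻¹) * t⁻¹ := by group
          rw [e1]; exact hUconj t _ hxy
        have hm2 : (w * (t * x)) * (w * (t * y))⁻¹ ∈ U := by
          have e2 : (w * (t * x)) * (w * (t * y))⁻¹ = (w * t) * (x * y⁻¹) * (w * t)⁻¹ := by group
          rw [e2]; exact hUconj (w * t) _ hxy
        have o1 := hUosc f hf _ _ hm1
        have o2 := hUosc f hf _ _ hm2
        have hb : ‖((f : G →ᵇ ℂ) (t * x) - (f : G →ᵇ ℂ) (t * y))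
            - ((f : G →ᵇ ℂ) (w * (t * x)) - (f : G →ᵇ ℂ) (w * (t * y)))‖
            < 2 * (ε / 2 ^ (k₀ + 1)) := by
          calc _ ≤ ‖(f : G →ᵇ ℂ) (t * x) - (f : G →ᵇ ℂ) (t * y)‖
              + ‖(f : G →ᵇ ℂ) (w * (t * x)) - (f : G →ᵇ ℂ) (w * (t * y))‖ := norm_sub_le _ _
            _ < 2 * (ε / 2 ^ (k₀ + 1)) := by linarith
        have h2k : (2 : ℝ) ^ (k + 1) ≤ (2 : ℝ) ^ k₀ :=
          pow_le_pow_right₀ (by norm_num) (by omega)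
        calc (2 : ℝ) ^ k * ‖(((f : G →ᵇ ℂ) (t * x) - (f : G →ᵇ ℂ) (t * y))
              - ((f : G →ᵇ ℂ) (w * (t * x)) - (f : G →ᵇ ℂ) (w * (t * y))))‖
            < (2 : ℝ) ^ k * (2 * (ε / 2 ^ (k₀ + 1))) :=
              mul_lt_mul_of_pos_left hb (by positivity)
          _ = (2 : ℝ) ^ (k + 1) * (ε / 2 ^ (k₀ + 1)) := by rw [pow_succ]; ring
          _ ≤ (2 : ℝ) ^ k₀ * (ε / 2 ^ (k₀ + 1)) :=
              mul_le_mul_of_nonneg_right h2k (by positivity)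
          _ = ε / 2 := by
              rw [pow_succ]
              have hpos : ((2 : ℝ) ^ k₀) ≠ 0 := by positivity
              field_simp
          _ < ε := by linarith
  refine ⟨D, hDequi, fun f hf s => Or.inl ⟨f, hf, s, rfl⟩, ⟨1, ?_⟩, ?_⟩
  · rintro h ⟨q, f, hf, hq, rfl⟩
    apply luc_norm_le zero_le_one
    intro x
    rw [rAct_apply]
    exact hq _ (Or.inl ⟨f, hf, x, rfl⟩)
  · intro ε hε
    obtain ⟨k, hk⟩ : ∃ k : ℕ, (2⁻¹ : ℝ) ^ k < ε :=
      exists_pow_lt_of_lt_one hε (by norm_num)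
    refine ⟨W k, hWnhds k, ?_⟩
    rintro h ⟨q, f, hf, hq, rfl⟩ x y hxy
    rw [rAct_apply, rAct_apply, ← map_sub, lTrans_shift]
    have e : lTrans y (lTrans (x * y⁻¹) f - f) = -(lTrans y (f - lTrans (x * y⁻¹) f)) := by
      rw [← lTrans_neg, neg_sub]
    rw [e, map_neg, norm_neg]
    have hmem : (2 : ℂ) ^ k • lTrans y (f - lTrans (x * y⁻¹) f) ∈ F₂ k :=
      ⟨f, hf, y, x * y⁻¹, hxy, rfl⟩
    have h1 : ‖q ((2 : ℂ) ^ k • lTrans y (f - lTrans (x * y⁻¹) f))‖ ≤ 1 :=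
      hq _ (Or.inr (Set.mem_iUnion.2 ⟨k, hmem⟩))
    rw [_root_.map_smul, norm_smul, hnorm2] at h1
    have h2 : ‖q (lTrans y (f - lTrans (x * y⁻¹) f))‖ ≤ (2⁻¹ : ℝ) ^ k := by
      calc ‖q (lTrans y (f - lTrans (x * y⁻¹) f))‖
          = (2⁻¹ : ℝ) ^ k * ((2 : ℝ) ^ k * ‖q (lTrans y (f - lTrans (x * y⁻¹) f))‖) := by
            rw [← mul_assoc, ← mul_pow]; norm_num
        _ ≤ (2⁻¹ : ℝ) ^ k * 1 := mul_le_mul_of_nonneg_left h1 (by positivity)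
        _ = (2⁻¹ : ℝ) ^ k := mul_one _
    exact h2.trans_lt hk

lemma UEB_nhds (m₀ : LUCDual G) {D : Set ↥(LUC G)} (hD : EquiLUC G D) {δ : ℝ} (hδ : 0 < δ) :
    {m : LUCDual G | ∀ h ∈ D, ‖m h - m₀ h‖ < δ} ∈ @nhds _ (UEBTop G) m₀ := by
  have hle : @nhds _ (UEBTop G) m₀ ≤ @nhds _ (TopologicalSpace.induced
      (fun m => UniformFun.ofFun (fun f : D => m f.1) : LUCDual G → UniformFun D ℂ)
      inferInstance) m₀ := by
    apply _root_.nhds_mono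
    exact iInf_le _ (⟨D, hD⟩ : {F : Set ↥(LUC G) // EquiLUC G F})
  apply hle
  rw [nhds_induced]
  refine Filter.mem_comap.2
    ⟨{g | (UniformFun.ofFun (fun f : D => m₀ f.1), g) ∈
        UniformFun.gen D ℂ {p : ℂ × ℂ | dist p.1 p.2 < δ}}, ?_, ?_⟩
  · exact (UniformFun.hasBasis_nhds D ℂ _).mem_of_mem (Metric.dist_mem_uniformity hδ)
  · intro m hm
    intro h hhD
    have := hm ⟨h, hhD⟩
    simpa [dist_eq_norm, norm_sub_rev] using this

end ProofAux

/-- **Theorem (paper Thm 5.8).** For every locally compact SIN group, convolution is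
jointly UEB continuous on all of `LUC(G)*` (no boundedness restriction). -/
theorem conv_UEB_jointly_continuous_of_locallyCompact_SIN
    (G : Type*) [Group G] [TopologicalSpace G] [IsTopologicalGroup G]
    [LocallyCompactSpace G] (hSIN : IsSIN G) :
    @Continuous (LUCDual G × LUCDual G) (LUCDual G)
      (@instTopologicalSpaceProd _ _ (UEBTop G) (UEBTop G)) (UEBTop G)
      (fun p => conv p.1 p.2) := by
  have key : ∀ F : Set ↥(LUC G), EquiLUC G F → ∀ m₀ n₀ : LUCDual G, ∀ ε > 0,
      ∃ P ∈ @nhds _ (UEBTop G) m₀, ∃ Q ∈ @nhds _ (UEBTop G) n₀,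
        ∀ m ∈ P, ∀ n ∈ Q, ∀ f ∈ F, ‖conv m n f - conv m₀ n₀ f‖ < ε := by
    intro F hF m₀ n₀ ε hε
    obtain ⟨D, hD, hF₁D, hE⟩ := core hSIN hF
    have hF₀ : EquiLUC G (rAct n₀ '' F) := equiLUC_rAct_image n₀ hF
    have hε3 : (0 : ℝ) < ε / 3 := by linarith
    set δ2 := min 1 (ε / 3 / (‖m₀‖ + 1)) with hδ2def
    have hδ2 : 0 < δ2 := lt_min one_pos (by positivity)
    refine ⟨_, Filter.inter_mem (UEB_nhds m₀ hF₀ hε3) (UEB_nhds m₀ hE hε3),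
      _, UEB_nhds n₀ hD hδ2, ?_⟩
    rintro m ⟨hm1, hm2⟩ n hn f hf
    have hqD : ∀ d ∈ D, ‖(n - n₀) d‖ ≤ δ2 := by
      intro d hd
      exact (hn d hd).le
    have e1 : conv m n f - conv m₀ n₀ f
        = (m (rAct n₀ f) - m₀ (rAct n₀ f)) + m₀ (rAct (n - n₀) f)
          + (m (rAct (n - n₀) f) - m₀ (rAct (n - n₀) f)) := by
      rw [conv_apply, conv_apply, rAct_sub_left, map_sub, map_sub]
      ring
    have t1 : ‖m (rAct n₀ f) - m₀ (rAct n₀ f)‖ < ε / 3 := hm1 _ ⟨f, hf, rfl⟩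
    have hrq : ‖rAct (n - n₀) f‖ ≤ δ2 := by
      apply luc_norm_le hδ2.le
      intro x
      rw [rAct_apply]
      exact hqD _ (hF₁D f hf x)
    have t2 : ‖m₀ (rAct (n - n₀) f)‖ < ε / 3 := by
      calc ‖m₀ (rAct (n - n₀) f)‖ ≤ ‖m₀‖ * ‖rAct (n - n₀) f‖ := m₀.le_opNorm _
        _ ≤ ‖m₀‖ * (ε / 3 / (‖m₀‖ + 1)) := by
            refine mul_le_mul_of_nonneg_left (hrq.trans (min_le_right _ _)) (norm_nonneg m₀)
        _ < (‖m₀‖ + 1) * (ε / 3 / (‖m₀‖ + 1)) :=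
            mul_lt_mul_of_pos_right (by linarith) (by positivity)
        _ = ε / 3 := by
            rw [mul_comm]; exact div_mul_cancel₀ _ (by positivity)
    have t3 : ‖m (rAct (n - n₀) f) - m₀ (rAct (n - n₀) f)‖ < ε / 3 := by
      refine hm2 _ ⟨n - n₀, f, hf, fun d hd => (hqD d hd).trans (min_le_left _ _), rfl⟩
    calc ‖conv m n f - conv m₀ n₀ f‖
        ≤ ‖m (rAct n₀ f) - m₀ (rAct n₀ f)‖ + ‖m₀ (rAct (n - n₀) f)‖
          + ‖m (rAct (n - n₀) f) - m₀ (rAct (n - n₀) f)‖ := by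
          rw [e1]; exact (norm_add_le _ _).trans (by gcongr; exact norm_add_le _ _)
      _ < ε := by linarith
  letI : TopologicalSpace (LUCDual G) := UEBTop G
  apply continuous_iInf_rng.2
  intro F
  apply continuous_induced_rng.2
  rw [continuous_iff_continuousAt]
  rintro ⟨m₀, n₀⟩
  rw [ContinuousAt, (UniformFun.hasBasis_nhds F.1 ℂ _).tendsto_right_iff]
  intro V hV
  obtain ⟨δ, hδ, hδV⟩ := Metric.mem_uniformity_dist.1 hV
  obtain ⟨P, hP, Q, hQ, hPQ⟩ := key F.1 F.2 m₀ n₀ δ hδ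
  rw [nhds_prod_eq]
  filter_upwards [Filter.prod_mem_prod hP hQ] with p hp
  simp only [Set.mem_setOf_eq, UniformFun.gen]
  intro x
  apply hδV
  rw [dist_eq_norm, norm_sub_rev]
  exact hPQ p.1 hp.1 p.2 hp.2 x.1 x.2
end
end

section
/- Let G be the group of increasing homeomorphisms of the interval [0,3] onto itself, with composition as the group operation and with the topology induced by the right-invariant metric Δ(x,y) = sup_{t∈[0,3]} |x(t) − y(t)|. Then the convolution map (m, n) ↦ m ∗ n on LUC(G)* is not jointly continuous on norm-bounded subsets of LUC(G)* in the UEB topology. -/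
noncomputable section
set_option linter.unusedSectionVars false

open Filter Topology MeasureTheory BoundedContinuousFunction

section HomeoGroup

/-- The unit interval `[0,3]` as a compact metric space. -/
abbrev II := ↥(Set.Icc (0:ℝ) 3)

/-- The group of self-homeomorphisms of `[0,3]`, with composition as multiplication. -/
instance : Group (II ≃ₜ II) where
  mul f g := g.trans f
  one := Homeomorph.refl II
  inv := Homeomorph.symm
  mul_assoc a b c := Homeomorph.ext fun x => rfl
  one_mul a := Homeomorph.ext fun x => rfl
  mul_one a := Homeomorph.ext fun x => rfl
  inv_mul_cancel a := Homeomorph.ext fun x => a.symm_apply_apply x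

@[simp] lemma homeoMul_apply (a b : II ≃ₜ II) (x : II) : (a * b) x = a (b x) := rfl

@[simp] lemma homeoInv_apply (a : II ≃ₜ II) (x : II) : a⁻¹ x = a.symm x := rfl

/-- The group of increasing homeomorphisms of `[0,3]` onto itself. -/
def IncHomeo : Subgroup (II ≃ₜ II) where
  carrier := {φ | StrictMono φ}
  one_mem' := fun _ _ h => h
  mul_mem' := fun {a b} ha hb x y h => ha (hb h)
  inv_mem' := fun {a} ha x y hxy => by
    rcases lt_trichotomy (a.symm x) (a.symm y) with h | h | h
    · exact h
    · exfalso
      have hxyeq : x = y := by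
        have := congrArg a h
        simpa using this
      exact lt_irrefl x (hxyeq ▸ hxy)
    · exfalso
      have h2 : y < x := by
        have := ha h
        simpa using this
      exact lt_asymm hxy h2

/-- An increasing homeomorphism of `[0,3]`, as a continuous map. -/
def toCM (φ : ↥IncHomeo) : C(II, II) :=
  ⟨⇑(φ : II ≃ₜ II), (φ : II ≃ₜ II).continuous⟩

lemma toCM_injective : Function.Injective toCM := by
  intro f g h
  apply Subtype.ext
  apply Homeomorph.ext
  intro x
  exact ContinuousMap.congr_fun h x

/-- The metric `Δ(x,y) = sup_{t ∈ [0,3]} |x(t) - y(t)|` on the group of increasing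
homeomorphisms of `[0,3]` (the sup metric, pulled back from `C([0,3],[0,3])`). -/
instance : MetricSpace ↥IncHomeo := MetricSpace.induced toCM toCM_injective inferInstance

lemma IncHomeo.dist_eq (φ ψ : ↥IncHomeo) : dist φ ψ = dist (toCM φ) (toCM ψ) := rfl

/-- The group of increasing homeomorphisms of `[0,3]` with the sup metric is a
topological group. -/
instance : IsTopologicalGroup ↥IncHomeo where
  continuous_mul := by
    rw [Metric.continuous_iff]
    rintro ⟨x₀, y₀⟩ ε hε
    have hx₀ : UniformContinuous fun t : II => (x₀ : II ≃ₜ II) t :=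
      CompactSpace.uniformContinuous_of_continuous (x₀ : II ≃ₜ II).continuous
    rw [Metric.uniformContinuous_iff] at hx₀
    obtain ⟨δ, hδpos, hδ⟩ := hx₀ (ε / 2) (by linarith)
    refine ⟨min δ (ε / 2), by positivity, ?_⟩
    rintro ⟨x, y⟩ hdist
    rw [Prod.dist_eq] at hdist
    have h1 : dist x x₀ < min δ (ε / 2) := (le_max_left _ _).trans_lt hdist
    have h2 : dist y y₀ < min δ (ε / 2) := (le_max_right _ _).trans_lt hdist
    show dist (x * y) (x₀ * y₀) < ε
    rw [IncHomeo.dist_eq, ContinuousMap.dist_lt_iff hε]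
    intro t
    show dist ((x : II ≃ₜ II) ((y : II ≃ₜ II) t)) ((x₀ : II ≃ₜ II) ((y₀ : II ≃ₜ II) t)) < ε
    have hb1 : dist ((x : II ≃ₜ II) ((y : II ≃ₜ II) t)) ((x₀ : II ≃ₜ II) ((y : II ≃ₜ II) t))
        < ε / 2 := by
      calc dist ((x : II ≃ₜ II) ((y : II ≃ₜ II) t)) ((x₀ : II ≃ₜ II) ((y : II ≃ₜ II) t))
          ≤ dist (toCM x) (toCM x₀) :=
            ContinuousMap.dist_apply_le_dist (f := toCM x) (g := toCM x₀) _
        _ = dist x x₀ := rfl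
        _ < ε / 2 := h1.trans_le (min_le_right _ _)
    have hb2 : dist ((x₀ : II ≃ₜ II) ((y : II ≃ₜ II) t)) ((x₀ : II ≃ₜ II) ((y₀ : II ≃ₜ II) t))
        < ε / 2 := by
      apply hδ
      calc dist ((y : II ≃ₜ II) t) ((y₀ : II ≃ₜ II) t)
          ≤ dist (toCM y) (toCM y₀) :=
            ContinuousMap.dist_apply_le_dist (f := toCM y) (g := toCM y₀) _
        _ = dist y y₀ := rfl
        _ < δ := h2.trans_le (min_le_left _ _)
    calc dist ((x : II ≃ₜ II) ((y : II ≃ₜ II) t)) ((x₀ : II ≃ₜ II) ((y₀ : II ≃ₜ II) t))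
        ≤ dist ((x : II ≃ₜ II) ((y : II ≃ₜ II) t)) ((x₀ : II ≃ₜ II) ((y : II ≃ₜ II) t))
          + dist ((x₀ : II ≃ₜ II) ((y : II ≃ₜ II) t)) ((x₀ : II ≃ₜ II) ((y₀ : II ≃ₜ II) t)) :=
          dist_triangle _ _ _
      _ < ε / 2 + ε / 2 := add_lt_add hb1 hb2
      _ = ε := by ring
  continuous_inv := by
    rw [Metric.continuous_iff]
    intro x₀ ε hε
    have hx₀ : UniformContinuous fun t : II => (x₀ : II ≃ₜ II).symm t :=
      CompactSpace.uniformContinuous_of_continuous (x₀ : II ≃ₜ II).symm.continuous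
    rw [Metric.uniformContinuous_iff] at hx₀
    obtain ⟨δ, hδpos, hδ⟩ := hx₀ ε hε
    refine ⟨δ, hδpos, ?_⟩
    intro x hx
    show dist x⁻¹ x₀⁻¹ < ε
    rw [IncHomeo.dist_eq, ContinuousMap.dist_lt_iff hε]
    intro t
    show dist ((x : II ≃ₜ II).symm t) ((x₀ : II ≃ₜ II).symm t) < ε
    have e1 : (x : II ≃ₜ II).symm t
        = (x₀ : II ≃ₜ II).symm ((x₀ : II ≃ₜ II) ((x : II ≃ₜ II).symm t)) :=
      ((x₀ : II ≃ₜ II).symm_apply_apply _).symm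
    rw [e1]
    apply hδ
    have e2 : t = (x : II ≃ₜ II) ((x : II ≃ₜ II).symm t) :=
      ((x : II ≃ₜ II).apply_symm_apply t).symm
    calc dist ((x₀ : II ≃ₜ II) ((x : II ≃ₜ II).symm t)) t
        = dist ((x₀ : II ≃ₜ II) ((x : II ≃ₜ II).symm t))
            ((x : II ≃ₜ II) ((x : II ≃ₜ II).symm t)) := by rw [← e2]
      _ ≤ dist (toCM x₀) (toCM x) :=
            ContinuousMap.dist_apply_le_dist (f := toCM x₀) (g := toCM x) _
      _ = dist x x₀ := dist_comm _ _
      _ < δ := hx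

end HomeoGroup

section PaperExample

open Filter Topology

/-! ### Generic construction of increasing homeomorphisms of `[0,3]` -/

lemma smono_max {f g : ℝ → ℝ} (hf : StrictMono f) (hg : StrictMono g) :
    StrictMono (fun x => max (f x) (g x)) := fun a b h => max_lt_max (hf h) (hg h)

lemma smono_min {f g : ℝ → ℝ} (hf : StrictMono f) (hg : StrictMono g) :
    StrictMono (fun x => min (f x) (g x)) := fun a b h => min_lt_min (hf h) (hg h)

lemma smono_affine {a b : ℝ} (ha : 0 < a) : StrictMono (fun t : ℝ => a * t + b) :=
  fun x y h => by dsimp; nlinarith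

/-- The map on `II` induced by `f : ℝ → ℝ`. -/
def mkIncMap (f : ℝ → ℝ) (hm : StrictMono f) (h0 : f 0 = 0) (h3 : f 3 = 3) : II → II :=
  fun t => ⟨f t, by
    constructor
    · have := hm.monotone t.2.1; rw [h0] at this; exact this
    · have := hm.monotone t.2.2; rw [h3] at this; exact this⟩

lemma mkIncMap_mono (f : ℝ → ℝ) (hm : StrictMono f) (h0 : f 0 = 0) (h3 : f 3 = 3) :
    StrictMono (mkIncMap f hm h0 h3) := fun a b h =>
  Subtype.mk_lt_mk.2 (hm (Subtype.coe_lt_coe.2 h))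

lemma mkIncMap_surj (f : ℝ → ℝ) (hm : StrictMono f) (hc : Continuous f)
    (h0 : f 0 = 0) (h3 : f 3 = 3) : Function.Surjective (mkIncMap f hm h0 h3) := by
  rintro ⟨c, hc0, hc3⟩
  have h := intermediate_value_Icc (by norm_num : (0:ℝ) ≤ 3) hc.continuousOn
  rw [h0, h3] at h
  obtain ⟨t, ht, hft⟩ := h ⟨hc0, hc3⟩
  exact ⟨⟨t, ht⟩, Subtype.ext hft⟩

/-- Build an element of `IncHomeo` from a strictly monotone continuous self-map of `ℝ`
fixing `0` and `3`. -/
def mkInc (f : ℝ → ℝ) (hm : StrictMono f) (hc : Continuous f)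
    (h0 : f 0 = 0) (h3 : f 3 = 3) : ↥IncHomeo :=
  ⟨Continuous.homeoOfEquivCompactToT2
      (f := (StrictMono.orderIsoOfSurjective (mkIncMap f hm h0 h3)
        (mkIncMap_mono f hm h0 h3) (mkIncMap_surj f hm hc h0 h3)).toEquiv)
      (Continuous.subtype_mk (hc.comp continuous_subtype_val) _),
    fun {a b} h => mkIncMap_mono f hm h0 h3 h⟩

@[simp] lemma mkInc_apply (f : ℝ → ℝ) (hm : StrictMono f) (hc : Continuous f)
    (h0 : f 0 = 0) (h3 : f 3 = 3) (t : II) :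
    (((mkInc f hm hc h0 h3 : ↥IncHomeo) : II ≃ₜ II) t : ℝ) = f t := rfl

end PaperExample

section PaperExample2

open Filter Topology

/-! ### The specific homeomorphisms -/

/-- `yfun ε` is piecewise linear through `(0,0)`, `(1, 1-ε)`, `(3,3)`. -/
def yfun (ε : ℝ) (t : ℝ) : ℝ := max ((1 - ε) * t + 0) ((1 + ε / 2) * t + (3 - 3 * (1 + ε / 2)))

/-- `xfun δ` is piecewise linear through `(0,0)`, `(1-δ,1)`, `(1,2)`, `(3,3)`. -/
def xfun (δ : ℝ) (t : ℝ) : ℝ :=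
  min (max ((1 / (1 - δ)) * t + 0) ((1 / δ) * t + (2 - 1 / δ))) ((1 / 2) * t + (3 / 2))

lemma yfun_mono {ε : ℝ} (hε : 0 < ε) (hε1 : ε < 1) : StrictMono (yfun ε) :=
  smono_max (smono_affine (by linarith)) (smono_affine (by linarith))

lemma yfun_cont (ε : ℝ) : Continuous (yfun ε) := by
  unfold yfun; fun_prop

lemma xfun_mono {δ : ℝ} (hδ : 0 < δ) (hδ2 : δ ≤ 1 / 2) : StrictMono (xfun δ) :=
  smono_min (smono_max (smono_affine (one_div_pos.2 (by linarith)))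
      (smono_affine (by positivity)))
    (smono_affine (by norm_num))

lemma xfun_cont (δ : ℝ) : Continuous (xfun δ) := by
  unfold xfun; fun_prop

lemma yfun_zero {ε : ℝ} (hε : 0 < ε) (hε1 : ε < 1) : yfun ε 0 = 0 := by
  unfold yfun; rw [max_eq_left (by nlinarith)]; ring

lemma yfun_three {ε : ℝ} (hε : 0 < ε) (hε1 : ε < 1) : yfun ε 3 = 3 := by
  unfold yfun; rw [max_eq_right (by nlinarith)]; ring

lemma yfun_one {ε : ℝ} (hε : 0 < ε) (hε1 : ε < 1) : yfun ε 1 = 1 - ε := by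
  unfold yfun
  rw [show (1 + ε / 2) * 1 + (3 - 3 * (1 + ε / 2)) = (1 - ε) * 1 + 0 by ring, max_self]
  ring

lemma yfun_close {ε : ℝ} (hε : 0 < ε) (hε1 : ε < 1) {t : ℝ} (ht : t ∈ Set.Icc (0:ℝ) 3) :
    |yfun ε t - t| ≤ 3 * ε := by
  obtain ⟨ht0, ht3⟩ := ht
  rw [abs_le]
  constructor
  · have h := le_max_left ((1 - ε) * t + 0) ((1 + ε / 2) * t + (3 - 3 * (1 + ε / 2)))
    unfold yfun; nlinarith
  · have h := max_le (show (1 - ε) * t + 0 ≤ t + 3 * ε by nlinarith)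
      (show (1 + ε / 2) * t + (3 - 3 * (1 + ε / 2)) ≤ t + 3 * ε by nlinarith)
    unfold yfun; linarith

lemma xfun_zero {δ : ℝ} (hδ : 0 < δ) (hδ2 : δ ≤ 1 / 2) : xfun δ 0 = 0 := by
  have h1 : (0:ℝ) < 1 - δ := by linarith
  unfold xfun
  rw [max_eq_left, min_eq_left]
  · ring
  · rw [show (1 / (1 - δ)) * 0 + 0 = (0:ℝ) by ring]; norm_num
  · have : 1 / δ ≥ 2 := by rw [ge_iff_le, le_div_iff₀ hδ]; linarith
    nlinarith

lemma xfun_three {δ : ℝ} (hδ : 0 < δ) (hδ2 : δ ≤ 1 / 2) : xfun δ 3 = 3 := by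
  have h1 : (0:ℝ) < 1 - δ := by linarith
  have hA : (3:ℝ) ≤ (1 / (1 - δ)) * 3 + 0 := by
    rw [add_zero, div_mul_eq_mul_div, le_div_iff₀ h1]; nlinarith
  unfold xfun
  rw [min_eq_right]
  · ring
  · refine le_trans (by norm_num : (1/2:ℝ) * 3 + 3/2 ≤ 3) (le_trans hA (le_max_left _ _))

lemma xfun_one {δ : ℝ} (hδ : 0 < δ) (hδ2 : δ ≤ 1 / 2) : xfun δ 1 = 2 := by
  have h1 : (0:ℝ) < 1 - δ := by linarith
  have hB : (1 / δ) * 1 + (2 - 1 / δ) = 2 := by ring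
  have hA : (1 / (1 - δ)) * 1 + 0 ≤ 2 := by
    rw [div_mul_eq_mul_div, div_add' _ _ _ (ne_of_gt h1), div_le_iff₀ h1]; nlinarith
  unfold xfun
  rw [hB, max_eq_right hA, min_eq_left (by norm_num)]

lemma xfun_left {δ ε : ℝ} (hδ : 0 < δ) (hδε : δ ≤ ε) (hε1 : ε < 1) :
    xfun δ (1 - ε) ≤ 1 := by
  have h1 : (0:ℝ) < 1 - δ := by linarith
  have hA : (1 / (1 - δ)) * (1 - ε) + 0 ≤ 1 := by
    rw [add_zero, div_mul_eq_mul_div, div_le_one h1]; nlinarith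
  have hB : (1 / δ) * (1 - ε) + (2 - 1 / δ) ≤ 1 := by
    have : (1 / δ) * (1 - ε) + (2 - 1 / δ) = 1 + (δ - ε) / δ := by field_simp; ring
    rw [this]
    have : (δ - ε) / δ ≤ 0 := div_nonpos_of_nonpos_of_nonneg (by linarith) hδ.le
    linarith
  exact le_trans (min_le_left _ _) (max_le hA hB)

/-- The sequence `y_j → 1` : piecewise linear with `y_j(1) = 1 - 1/(j+2)`. -/
def yel (j : ℕ) : ↥IncHomeo :=
  mkInc (yfun (1 / (j + 2)))
    (yfun_mono (by positivity) (by rw [div_lt_one (by positivity)]; have : (0:ℝ) ≤ (j:ℝ) := Nat.cast_nonneg j; linarith))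
    (yfun_cont _)
    (yfun_zero (by positivity) (by rw [div_lt_one (by positivity)]; have : (0:ℝ) ≤ (j:ℝ) := Nat.cast_nonneg j; linarith))
    (yfun_three (by positivity) (by rw [div_lt_one (by positivity)]; have : (0:ℝ) ≤ (j:ℝ) := Nat.cast_nonneg j; linarith))

/-- The sequence `x_k` : piecewise linear expanding `[1-1/(k+3), 1]` onto `[1,2]`. -/
def xel (k : ℕ) : ↥IncHomeo :=
  mkInc (xfun (1 / (k + 3)))
    (xfun_mono (by positivity) (by rw [div_le_iff₀ (by positivity)]; have : (0:ℝ) ≤ (k:ℝ) := Nat.cast_nonneg k; linarith))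
    (xfun_cont _)
    (xfun_zero (by positivity) (by rw [div_le_iff₀ (by positivity)]; have : (0:ℝ) ≤ (k:ℝ) := Nat.cast_nonneg k; linarith))
    (xfun_three (by positivity) (by rw [div_le_iff₀ (by positivity)]; have : (0:ℝ) ≤ (k:ℝ) := Nat.cast_nonneg k; linarith))

end PaperExample2

section PaperExample3

open Filter Topology BoundedContinuousFunction

/-- The point `1 ∈ [0,3]`. -/
def p1 : II := ⟨1, by norm_num⟩

/-- Evaluation of a homeomorphism at the point `1`. -/
def ev (x : ↥IncHomeo) : ℝ := (((x : II ≃ₜ II)) p1 : ℝ)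

lemma ev_mem (x : ↥IncHomeo) : ev x ∈ Set.Icc (0:ℝ) 3 := ((x : II ≃ₜ II) p1).2

@[simp] lemma toCM_apply (x : ↥IncHomeo) (t : II) : toCM x t = (x : II ≃ₜ II) t := rfl

lemma toCM_one (t : II) : toCM (1 : ↥IncHomeo) t = t := rfl

lemma ev_lipschitz (s t : ↥IncHomeo) : |ev s - ev t| ≤ dist s t := by
  have h := ContinuousMap.dist_apply_le_dist (f := toCM s) (g := toCM t) p1
  rw [IncHomeo.dist_eq]
  calc |ev s - ev t| = dist ((s : II ≃ₜ II) p1) ((t : II ≃ₜ II) p1) := by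
        rw [Subtype.dist_eq, Real.dist_eq]; rfl
    _ ≤ dist (toCM s) (toCM t) := h

lemma ev_ruc (s t : ↥IncHomeo) : |ev s - ev t| ≤ dist (s * t⁻¹) 1 := by
  set q : II := (t : II ≃ₜ II) p1 with hq
  have hst : ((s * t⁻¹ : ↥IncHomeo) : II ≃ₜ II) q = (s : II ≃ₜ II) p1 := by
    push_cast [homeoMul_apply, homeoInv_apply]
    rw [hq, Homeomorph.symm_apply_apply]
  have h := ContinuousMap.dist_apply_le_dist (f := toCM (s * t⁻¹)) (g := toCM (1 : ↥IncHomeo)) q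
  rw [toCM_apply, toCM_one, hst] at h
  rw [IncHomeo.dist_eq]
  calc |ev s - ev t| = dist ((s : II ≃ₜ II) p1) q := by
        rw [Subtype.dist_eq, Real.dist_eq]; rfl
    _ ≤ dist (toCM (s * t⁻¹)) (toCM (1 : ↥IncHomeo)) := h

lemma ev_continuous : Continuous ev := by
  refine (LipschitzWith.of_dist_le_mul (K := 1) fun s t => ?_).continuous
  rw [Real.dist_eq]
  simpa using ev_lipschitz s t

/-- The test function `f₀(x) = x(1)` as an element of `LUC(G)`. -/
def f0 : ↥(LUC ↥IncHomeo) :=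
  ⟨BoundedContinuousFunction.ofNormedAddCommGroup (fun x => (ev x : ℂ))
      (Complex.continuous_ofReal.comp ev_continuous) 3
      (fun x => by
        rw [Complex.norm_real, Real.norm_eq_abs, abs_le]
        have h := ev_mem x; exact ⟨by linarith [h.1], h.2⟩),
    by
      intro ε hε
      refine ⟨Metric.ball 1 ε, Metric.ball_mem_nhds _ hε, fun s t hst => ?_⟩
      have h1 : ‖(ev s : ℂ) - (ev t : ℂ)‖ = |ev s - ev t| := by
        rw [← Complex.ofReal_sub, Complex.norm_real, Real.norm_eq_abs]
      show ‖(ev s : ℂ) - (ev t : ℂ)‖ < ε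
      rw [h1]
      exact lt_of_le_of_lt (ev_ruc s t) (Metric.mem_ball.1 hst)⟩

@[simp] lemma f0_apply (x : ↥IncHomeo) : ((f0 : ↥(LUC ↥IncHomeo)) : ↥IncHomeo →ᵇ ℂ) x = (ev x : ℂ) := rfl

/-- Point-evaluation (Dirac) functionals on `LUC(G)`. -/
def dirac (y : ↥IncHomeo) : LUCDual ↥IncHomeo :=
  LinearMap.mkContinuous
    { toFun := fun f => (f : ↥IncHomeo →ᵇ ℂ) y
      map_add' := fun f g => by simp
      map_smul' := fun c f => by simp }
    1 (fun f => by
      rw [one_mul]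
      exact (BoundedContinuousFunction.norm_coe_le_norm (f : ↥IncHomeo →ᵇ ℂ) y).trans
        (le_of_eq (Submodule.coe_norm f).symm))

@[simp] lemma dirac_apply (y : ↥IncHomeo) (f : ↥(LUC ↥IncHomeo)) :
    dirac y f = (f : ↥IncHomeo →ᵇ ℂ) y := rfl

lemma dirac_norm_le (y : ↥IncHomeo) : ‖dirac y‖ ≤ 1 :=
  LinearMap.mkContinuous_norm_le _ zero_le_one _

/-- A fixed ultrafilter on `ℕ` extending the cofinite filter. -/
def UU : Ultrafilter ℕ := Ultrafilter.of Filter.cofinite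

lemma UU_ge (j : ℕ) : {k : ℕ | j ≤ k} ∈ UU := by
  apply Ultrafilter.of_le Filter.cofinite
  rw [Nat.cofinite_eq_atTop]
  exact Filter.mem_atTop j

lemma mfun_exists (f : ↥(LUC ↥IncHomeo)) :
    ∃ c : ℂ, Tendsto (fun k => (f : ↥IncHomeo →ᵇ ℂ) (xel k)) (↑UU) (𝓝 c) := by
  set g : ℕ → ℂ := fun k => (f : ↥IncHomeo →ᵇ ℂ) (xel k)
  have hle : ↑(UU.map g) ≤ Filter.principal (Metric.closedBall (0:ℂ) ‖f‖) := by
    rw [le_principal_iff]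
    refine Filter.mem_map.2 (Filter.univ_mem' fun k => ?_)
    rw [Set.mem_preimage, Metric.mem_closedBall, dist_zero_right]
    exact (BoundedContinuousFunction.norm_coe_le_norm _ _).trans
      (le_of_eq (Submodule.coe_norm f).symm)
  obtain ⟨c, _, hc⟩ := (isCompact_closedBall (0:ℂ) ‖f‖).ultrafilter_le_nhds (UU.map g) hle
  refine ⟨c, ?_⟩
  show Filter.map g ↑UU ≤ 𝓝 c
  rwa [← Ultrafilter.coe_map]

/-- The value of the ultrafilter-limit functional. -/
def mval (f : ↥(LUC ↥IncHomeo)) : ℂ := (mfun_exists f).choose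

lemma mval_tendsto (f : ↥(LUC ↥IncHomeo)) :
    Tendsto (fun k => (f : ↥IncHomeo →ᵇ ℂ) (xel k)) (↑UU) (𝓝 (mval f)) :=
  (mfun_exists f).choose_spec

/-- The ultrafilter-limit functional `m ∈ LUC(G)*`. -/
def mfun : LUCDual ↥IncHomeo :=
  LinearMap.mkContinuous
    { toFun := mval
      map_add' := fun f g => by
        refine tendsto_nhds_unique (mval_tendsto (f + g)) ?_
        have h := (mval_tendsto f).add (mval_tendsto g)
        convert h using 1
        rfl
      map_smul' := fun c f => by
        refine tendsto_nhds_unique (mval_tendsto (c • f)) ?_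
        have h := (mval_tendsto f).const_mul c
        simp only [RingHom.id_apply, smul_eq_mul]
        convert h using 1
        rfl }
    1 (fun f => by
      rw [one_mul]
      refine le_of_tendsto (mval_tendsto f).norm (Filter.Eventually.of_forall fun k => ?_)
      exact (BoundedContinuousFunction.norm_coe_le_norm _ _).trans
        (le_of_eq (Submodule.coe_norm f).symm))

@[simp] lemma mfun_apply (f : ↥(LUC ↥IncHomeo)) : mfun f = mval f := rfl

lemma mfun_norm_le : ‖mfun‖ ≤ 1 := LinearMap.mkContinuous_norm_le _ zero_le_one _

end PaperExample3

section PaperExample4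

open Filter Topology BoundedContinuousFunction

lemma eps_pos (j : ℕ) : (0:ℝ) < 1 / (j + 2) := by positivity

lemma eps_lt_one (j : ℕ) : (1:ℝ) / (j + 2) < 1 := by
  rw [div_lt_one (by positivity)]
  have : (0:ℝ) ≤ (j:ℝ) := Nat.cast_nonneg j
  linarith

lemma del_pos (k : ℕ) : (0:ℝ) < 1 / (k + 3) := by positivity

lemma del_le_half (k : ℕ) : (1:ℝ) / (k + 3) ≤ 1 / 2 := by
  rw [div_le_div_iff₀ (by positivity) (by norm_num)]
  have : (0:ℝ) ≤ (k:ℝ) := Nat.cast_nonneg k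
  linarith

lemma ev_xel (k : ℕ) : ev (xel k) = 2 := by
  show ((((xel k : ↥IncHomeo) : II ≃ₜ II)) p1 : ℝ) = 2
  rw [xel, mkInc_apply]
  exact xfun_one (del_pos k) (del_le_half k)

lemma ev_mul_le {j k : ℕ} (hjk : j ≤ k) : ev (xel k * yel j) ≤ 1 := by
  have hcoe : ((xel k * yel j : ↥IncHomeo) : II ≃ₜ II) p1
      = ((xel k : ↥IncHomeo) : II ≃ₜ II) (((yel j : ↥IncHomeo) : II ≃ₜ II) p1) := by
    rw [Subgroup.coe_mul, homeoMul_apply]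
  have hy : ((((yel j : ↥IncHomeo) : II ≃ₜ II) p1 : II) : ℝ) = 1 - 1 / (j + 2) := by
    rw [yel, mkInc_apply]
    exact yfun_one (eps_pos j) (eps_lt_one j)
  have hδε : (1:ℝ) / (k + 3) ≤ 1 / (j + 2) := by
    rw [div_le_div_iff₀ (by positivity) (by positivity)]
    have : (j:ℝ) ≤ (k:ℝ) := Nat.cast_le.2 hjk
    linarith
  show ((((xel k * yel j : ↥IncHomeo) : II ≃ₜ II)) p1 : ℝ) ≤ 1
  rw [hcoe]
  rw [show ((xel k : ↥IncHomeo) : II ≃ₜ II) = ((mkInc _ _ _ _ _ : ↥IncHomeo) : II ≃ₜ II) from rfl,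
    mkInc_apply, hy]
  exact xfun_left (del_pos k) hδε (eps_lt_one j)

lemma dist_yel (j : ℕ) : dist (yel j) (1 : ↥IncHomeo) ≤ 3 / (j + 2) := by
  rw [IncHomeo.dist_eq]
  refine (ContinuousMap.dist_le (by positivity)).2 fun t => ?_
  rw [toCM_apply, toCM_one, Subtype.dist_eq, Real.dist_eq]
  have happ : ((((yel j : ↥IncHomeo) : II ≃ₜ II)) t : ℝ) = yfun (1/((j:ℝ)+2)) (t:ℝ) := by
    rw [yel, mkInc_apply]
  rw [happ]
  have h := yfun_close (eps_pos j) (eps_lt_one j) t.2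
  calc |yfun (1/(j+2)) (t:ℝ) - (t:ℝ)| ≤ 3 * (1/(j+2)) := h
    _ = 3 / (j + 2) := by ring

lemma yel_tendsto : Tendsto yel atTop (𝓝 (1 : ↥IncHomeo)) := by
  rw [tendsto_iff_dist_tendsto_zero]
  refine squeeze_zero (fun _ => dist_nonneg) dist_yel ?_
  have h2 : Tendsto (fun j : ℕ => ((j:ℝ) + 2)) atTop atTop :=
    tendsto_atTop_add_const_right _ 2 tendsto_natCast_atTop_atTop
  exact Tendsto.div_atTop tendsto_const_nhds h2

/-- Characterization of convergence in the UEB topology. -/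
lemma tendsto_UEB_iff {ι : Type*} (l : Filter ι) (μ : ι → LUCDual ↥IncHomeo)
    (μ₀ : LUCDual ↥IncHomeo) :
    Tendsto μ l (@nhds _ (UEBTop ↥IncHomeo) μ₀) ↔
      ∀ F : {F : Set ↥(LUC ↥IncHomeo) // EquiLUC ↥IncHomeo F}, ∀ ε > 0,
        ∀ᶠ i in l, ∀ f ∈ F.1, dist (μ₀ f) (μ i f) < ε := by
  rw [show UEBTop ↥IncHomeo = ⨅ F : {F : Set ↥(LUC ↥IncHomeo) // EquiLUC ↥IncHomeo F},
      TopologicalSpace.induced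
        (fun m => UniformFun.ofFun (fun f : F.1 => m f.1) : LUCDual ↥IncHomeo → UniformFun F.1 ℂ)
        inferInstance from rfl, _root_.nhds_iInf, tendsto_iInf]
  refine forall_congr' fun F => ?_
  rw [nhds_induced, tendsto_comap_iff, UniformFun.tendsto_iff_tendstoUniformly,
    Metric.tendstoUniformly_iff]
  refine forall₂_congr fun ε hε => eventually_congr (Eventually.of_forall fun i => ?_)
  exact Subtype.forall

lemma equiLUC_singleton : EquiLUC ↥IncHomeo {f0} :=
  ⟨⟨‖f0‖, fun f hf => by rw [Set.mem_singleton_iff] at hf; rw [hf]⟩,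
   fun ε hε => by
    obtain ⟨U, hU, h⟩ := f0.2 ε hε
    exact ⟨U, hU, fun f hf s t hst => by
      rw [Set.mem_singleton_iff] at hf; subst hf; exact h s t hst⟩⟩

lemma dirac_tendsto :
    Tendsto (fun j => dirac (yel j)) atTop (@nhds _ (UEBTop ↥IncHomeo) (dirac 1)) := by
  rw [tendsto_UEB_iff]
  intro F ε hε
  obtain ⟨U, hU, hFU⟩ := F.2.2 ε hε
  filter_upwards [Filter.mem_map.1 (yel_tendsto hU)] with j hj
  intro f hf
  have hUj : yel j * (1 : ↥IncHomeo)⁻¹ ∈ U := by simpa using hj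
  have := hFU f hf (yel j) 1 hUj
  rw [dist_eq_norm]
  simp only [dirac_apply]
  rw [norm_sub_rev]
  exact this

lemma rAct_dirac_one (f : ↥(LUC ↥IncHomeo)) : rAct (dirac 1) f = f := by
  apply Subtype.ext
  ext s
  rw [rAct_apply, dirac_apply, lTrans_apply, mul_one]

lemma conv_dirac_one : conv mfun (dirac 1) = mfun := by
  ext f
  rw [conv_apply, rAct_dirac_one]

lemma mfun_f0 : mfun f0 = 2 := by
  rw [mfun_apply]
  refine tendsto_nhds_unique (mval_tendsto f0) ?_
  have : (fun k => ((f0 : ↥IncHomeo →ᵇ ℂ)) (xel k)) = fun _ => (2:ℂ) := by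
    funext k
    rw [f0_apply, ev_xel]
    norm_num
  rw [this]
  exact tendsto_const_nhds

lemma key_lower (j : ℕ) : 1 ≤ ‖conv mfun (dirac (yel j)) f0 - mfun f0‖ := by
  rw [conv_apply, mfun_f0, mfun_apply]
  set c := mval (rAct (dirac (yel j)) f0) with hc
  have htc : Tendsto (fun k => (ev (xel k * yel j) : ℂ)) (↑UU) (𝓝 c) := by
    have h := mval_tendsto (rAct (dirac (yel j)) f0)
    have e : (fun k => ((rAct (dirac (yel j)) f0 : ↥(LUC ↥IncHomeo)) : ↥IncHomeo →ᵇ ℂ) (xel k))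
        = fun k => (ev (xel k * yel j) : ℂ) := by
      funext k
      rw [rAct_apply, dirac_apply, lTrans_apply, f0_apply]
    rwa [e] at h
  have hre : c.re ≤ 1 := by
    have hretend : Tendsto (fun k => (ev (xel k * yel j) : ℂ).re) (↑UU) (𝓝 c.re) :=
      (Complex.continuous_re.tendsto c).comp htc
    refine le_of_tendsto hretend ?_
    filter_upwards [UU_ge j] with k hk
    rw [Complex.ofReal_re]
    exact ev_mul_le hk
  calc (1:ℝ) ≤ |(c - 2).re| := by
        have h2 : (c - 2).re = c.re - 2 := by simp [Complex.sub_re]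
        rw [h2, le_abs]
        right
        linarith
    _ ≤ ‖c - 2‖ := Complex.abs_re_le_norm _

end PaperExample4


/-- **(paper, Example in Section 5).** For `G` the group of increasing homeomorphisms
of `[0,3]` (with composition, and the topology of the right-invariant sup metric
`Δ(x,y) = sup_t |x(t) - y(t)|`), convolution on `LUC(G)*` is *not* jointly
continuous on norm-bounded sets in the UEB topology. -/
theorem conv_not_UEB_jointly_continuous_on_bounded_IncHomeo :
    ¬ ∀ B₁ B₂ : Set (LUCDual ↥IncHomeo),
        (∃ C, ∀ m ∈ B₁, ‖m‖ ≤ C) → (∃ C, ∀ m ∈ B₂, ‖m‖ ≤ C) →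
        @ContinuousOn (LUCDual ↥IncHomeo × LUCDual ↥IncHomeo) (LUCDual ↥IncHomeo)
          (@instTopologicalSpaceProd _ _ (UEBTop ↥IncHomeo) (UEBTop ↥IncHomeo))
          (UEBTop ↥IncHomeo)
          (fun p => conv p.1 p.2) (B₁ ×ˢ B₂) := by
  intro H
  letI : TopologicalSpace (LUCDual ↥IncHomeo) := UEBTop ↥IncHomeo
  set B₂ : Set (LUCDual ↥IncHomeo) := insert (dirac 1) (Set.range fun j => dirac (yel j))
    with hB₂
  have hb1 : ∃ C, ∀ m ∈ ({mfun} : Set (LUCDual ↥IncHomeo)), ‖m‖ ≤ C :=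
    ⟨1, fun m hm => by rw [Set.mem_singleton_iff] at hm; rw [hm]; exact mfun_norm_le⟩
  have hb2 : ∃ C, ∀ m ∈ B₂, ‖m‖ ≤ C := by
    refine ⟨1, fun n hn => ?_⟩
    rcases Set.mem_insert_iff.1 hn with h | h
    · rw [h]; exact dirac_norm_le 1
    · obtain ⟨j, hj⟩ := h
      rw [← hj]; exact dirac_norm_le _
  have hmem : (mfun, dirac 1) ∈ ({mfun} : Set (LUCDual ↥IncHomeo)) ×ˢ B₂ :=
    ⟨rfl, Set.mem_insert _ _⟩
  have hcw := H {mfun} B₂ hb1 hb2 (mfun, dirac 1) hmem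
  have hprod : Tendsto (fun j => ((mfun, dirac (yel j)) : LUCDual ↥IncHomeo × LUCDual ↥IncHomeo))
      atTop (𝓝[({mfun} : Set (LUCDual ↥IncHomeo)) ×ˢ B₂] (mfun, dirac 1)) := by
    refine tendsto_nhdsWithin_of_tendsto_nhds_of_eventually_within _ ?_ ?_
    · exact Tendsto.prodMk_nhds tendsto_const_nhds dirac_tendsto
    · exact Filter.Eventually.of_forall fun j => ⟨rfl, Set.mem_insert_of_mem _ ⟨j, rfl⟩⟩
  have hlim : Tendsto (fun j => conv mfun (dirac (yel j))) atTop (𝓝 mfun) := by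
    have h := Filter.Tendsto.comp hcw hprod
    rw [← conv_dirac_one]
    exact h
  have h1 := (tendsto_UEB_iff atTop _ mfun).1 hlim ⟨{f0}, equiLUC_singleton⟩ 1 one_pos
  obtain ⟨j, hj⟩ := h1.exists
  have h2 := hj f0 rfl
  rw [dist_eq_norm, norm_sub_rev] at h2
  exact absurd h2 (not_lt.2 (key_lower j))
end
end
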